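/- arXiv:math-ph/0007006 — 7 statements merged into one kernel-verified Lean document; each statement's English description precedes it below -/
import Mathlib

section
/- If λ is an eigenvalue of the problem −u''(x) + (P(x²) − (ix)^{2n+1})u(x) = λu(x) (i.e., there exists an eigenfunction u for λ in the sense of the stated decay conditions), then λ ≠ 0, Re λ > 0, and |arg λ| ≤ π/(2n+3); equivalently, Re λ > 0 and |Im λ| ≤ tan(π/(2n+3))·Re λ. -/
open Complex Real ComplexConjugate

open Filter intervalIntegral

lemma no_escape (F D E : ℝ → ℝ) (C c κ : ℝ) (hc : 0 < c) (hκ : 0 < κ)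
    (hF : ∀ t, HasDerivAt F (D t) t)
    (hDc : Continuous D) (hEc : Continuous E)
    (hDE : ∀ t, E t ≤ D t) (hE0 : ∀ t, 0 ≤ E t)
    (t₀ : ℝ) (ht₀ : 0 < E t₀)
    (herr : ∀ t : ℝ, |F t| ≤ C * Real.exp (-c * |t| ^ κ)) : False := by
  -- a small interval around t₀ where E is at least E t₀ / 2
  obtain ⟨δ, hδ, hball⟩ : ∃ δ > 0, ∀ x ∈ Set.Icc (t₀ - δ) (t₀ + δ), E t₀ / 2 ≤ E x := by
    have h := hEc.continuousAt (x := t₀)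
    have h2 : ∀ᶠ x in nhds t₀, E t₀ / 2 ≤ E x := by
      exact h.eventually_const_le (by linarith : E t₀ / 2 < E t₀)
    obtain ⟨ε, hε, hsub⟩ := Metric.eventually_nhds_iff.mp h2
    refine ⟨ε / 2, by linarith, fun x hx => hsub ?_⟩
    rw [Real.dist_eq]
    rcases hx with ⟨h1, h2⟩
    rw [abs_lt]; constructor <;> linarith
  set ε : ℝ := δ * E t₀ with hεdef
  have hεpos : 0 < ε := by positivity
  -- for every T covering the interval, F T - F (-T) ≥ ε
  have key : ∀ T : ℝ, |t₀| + δ ≤ T → ε ≤ F T - F (-T) := by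
    intro T hT
    have hT0 : (0:ℝ) < T := by
      have := abs_nonneg t₀; linarith
    have hab : -T ≤ t₀ - δ ∧ t₀ + δ ≤ T := by
      have h1 := neg_abs_le t₀; have h2 := le_abs_self t₀
      constructor <;> linarith
    have hftc : ∫ t in (-T)..T, D t = F T - F (-T) := by
      exact integral_eq_sub_of_hasDerivAt (fun t _ => hF t)
        (hDc.intervalIntegrable _ _)
    have h1 : ∫ t in (-T)..T, E t ≤ ∫ t in (-T)..T, D t := by
      apply integral_mono_on (by linarith) (hEc.intervalIntegrable _ _)
        (hDc.intervalIntegrable _ _) (fun x _ => hDE x)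
    have h2 : ∫ t in (t₀ - δ)..(t₀ + δ), E t ≤ ∫ t in (-T)..T, E t := by
      rw [← integral_add_adjacent_intervals (a := -T) (b := t₀ - δ) (c := T)
        (hEc.intervalIntegrable _ _) (hEc.intervalIntegrable _ _),
        ← integral_add_adjacent_intervals (a := t₀ - δ) (b := t₀ + δ) (c := T)
        (hEc.intervalIntegrable _ _) (hEc.intervalIntegrable _ _)]
      have i1 : 0 ≤ ∫ t in (-T)..(t₀ - δ), E t :=
        integral_nonneg (by linarith [hab.1]) (fun x _ => hE0 x)
      have i2 : 0 ≤ ∫ t in (t₀ + δ)..T, E t :=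
        integral_nonneg (by linarith [hab.2]) (fun x _ => hE0 x)
      linarith
    have h3 : ε ≤ ∫ t in (t₀ - δ)..(t₀ + δ), E t := by
      have : ∫ t in (t₀ - δ)..(t₀ + δ), (E t₀ / 2) ≤ ∫ t in (t₀ - δ)..(t₀ + δ), E t := by
        apply integral_mono_on (by linarith) (intervalIntegrable_const)
          (hEc.intervalIntegrable _ _) (fun x hx => hball x hx)
      rw [integral_const, smul_eq_mul] at this
      have : (t₀ + δ - (t₀ - δ)) * (E t₀ / 2) ≤ _ := this
      calc ε = (t₀ + δ - (t₀ - δ)) * (E t₀ / 2) := by ring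
      _ ≤ _ := this
    linarith
  -- decay kills it
  have hdecay : Tendsto (fun T : ℝ => C * Real.exp (-c * T ^ κ)) atTop (nhds 0) := by
    have h1 : Tendsto (fun T : ℝ => -c * T ^ κ) atTop atBot :=
      (tendsto_rpow_atTop hκ).const_mul_atTop_of_neg (by linarith)
    simpa using (Real.tendsto_exp_atBot.comp h1).const_mul C
  have hev : ∀ᶠ T in atTop, 2 * (C * Real.exp (-c * T ^ κ)) < ε := by
    have := hdecay.const_mul 2
    simp only [mul_zero] at this
    exact this.eventually_lt_const hεpos
  obtain ⟨T, hT1, hT2⟩ := ((hev.and (eventually_ge_atTop (|t₀| + δ))).exists)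
  have hT0 : (0:ℝ) ≤ T := le_trans (by positivity) hT2
  have e1 := herr T
  have e2 := herr (-T)
  rw [abs_neg, _root_.abs_of_nonneg hT0] at e2
  rw [_root_.abs_of_nonneg hT0] at e1
  have := key T hT2
  have hF1 : F T - F (-T) ≤ |F T| + |F (-T)| := by
    have := le_abs_self (F T); have := neg_abs_le (F (-T)); linarith
  linarith

lemma ray_deriv (u : ℂ → ℂ) (hu : Differentiable ℂ u) (w : ℂ) (t : ℝ) :
    HasDerivAt (fun s : ℝ => u (w * s)) (w * deriv u (w * t)) t := by
  have h1 : HasDerivAt (fun s : ℝ => w * (s : ℂ)) w t := by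
    simpa using (Complex.ofRealCLM.hasDerivAt (x := t)).const_mul w
  have h2 := ((hu (w * t)).hasDerivAt.hasFDerivAt.restrictScalars ℝ).comp_hasDerivAt t h1
  convert h2 using 1
  · rfl
  · rfl
  simp [mul_comm]

lemma line_zero (u : ℂ → ℂ) (hu : Differentiable ℂ u) (w : ℂ) (hw : w ≠ 0)
    (h : ∀ t : ℝ, u (w * t) = 0) : u = 0 := by
  have hA : AnalyticOnNhd ℂ u Set.univ := analyticOnNhd_univ_iff_differentiable.mpr hu
  have ht : Tendsto (fun m : ℕ => w * ((1 / (m + 1) : ℝ) : ℂ)) atTop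
      (nhdsWithin 0 {(0 : ℂ)}ᶜ) := by
    rw [tendsto_nhdsWithin_iff]
    constructor
    · have h0 : Tendsto (fun m : ℕ => ((1 / (m + 1) : ℝ) : ℂ)) atTop (nhds 0) := by
        have h1 := tendsto_one_div_add_atTop_nhds_zero_nat (𝕜 := ℝ)
        have h2 := (Complex.continuous_ofReal.tendsto 0).comp h1
        exact h2
      simpa using h0.const_mul w
    · filter_upwards with m
      simp only [Set.mem_compl_iff, Set.mem_singleton_iff]
      intro hcon
      rcases mul_eq_zero.mp hcon with h' | h'
      · exact hw h'
      · have : (1 / ((m:ℝ) + 1) : ℝ) = 0 := by exact_mod_cast h'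
        have : ((m:ℝ) + 1) ≠ 0 := by positivity
        simp_all
  have freq : ∃ᶠ z in nhdsWithin 0 {(0 : ℂ)}ᶜ, u z = 0 :=
    ht.frequently (Filter.Frequently.of_forall fun m => h _)
  have := hA.eqOn_zero_of_preconnected_of_frequently_eq_zero isPreconnected_univ
    (Set.mem_univ 0) freq
  funext z
  exact this (Set.mem_univ z)

lemma deriv_entire (u : ℂ → ℂ) (hu : Differentiable ℂ u) : Differentiable ℂ (deriv u) :=
  fun z => ((analyticOnNhd_univ_iff_differentiable.mpr hu).deriv z trivial).differentiableAt

lemma hasDerivAt_G (u Q : ℂ → ℂ) (hu : Differentiable ℂ u)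
    (hode : ∀ z : ℂ, iteratedDeriv 2 u z = Q z * u z) (w : ℂ) (t : ℝ) :
    HasDerivAt (fun s : ℝ => (starRingEnd ℂ) (u (w * s)) * (w * deriv u (w * s)))
      (((Complex.normSq (w * deriv u (w * t)) : ℝ) : ℂ)
        + w ^ 2 * Q (w * t) * ((Complex.normSq (u (w * t)) : ℝ) : ℂ)) t := by
  have hu' : Differentiable ℂ (deriv u) := deriv_entire u hu
  have h1 := ray_deriv u hu w t
  have h2 := (ray_deriv (deriv u) hu' w t).const_mul w
  have h3 : deriv (deriv u) (w * t) = Q (w * t) * u (w * t) := by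
    rw [← hode, iteratedDeriv_succ, iteratedDeriv_one]
  have h4 := h1.star.mul h2
  convert h4 using 1
  · rfl
  · rfl
  rw [h3, ← Complex.mul_conj (u (w * t)), ← Complex.mul_conj (w * deriv u (w * t))]
  simp only [Complex.star_def]
  ring

lemma master (n : ℕ) (a : ℕ → ℝ) (ha : ∀ k, k ≤ n → 0 ≤ a k) (lam : ℂ) (u : ℂ → ℂ)
    (hu : Differentiable ℂ u)
    (hode : ∀ z : ℂ, iteratedDeriv 2 u z =
      ((∑ k ∈ Finset.range (n + 1), (a k : ℂ) * (z ^ 2) ^ k)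
        - (Complex.I * z) ^ (2 * n + 1) - lam) * u z)
    (w : ℂ) (hw : ‖w‖ = 1) (s : ℝ) (hs : |s| = 1)
    (hk : ∀ k, k ≤ n → 0 ≤ s * (w ^ (2 * k + 2)).im)
    (hodd : (Complex.I ^ (2 * n + 1) * w ^ (2 * n + 3)).im = 0)
    (hne : ∃ t : ℝ, u (w * t) ≠ 0)
    (C c κ : ℝ) (hc : 0 < c) (hκ : 0 < κ)
    (hray : ∀ t : ℝ, ‖u (w * t)‖ + ‖deriv u (w * t)‖
      ≤ C * Real.exp (-c * |t| ^ κ)) :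
    0 ≤ s * (lam * w ^ 2).im := by
  set Q : ℂ → ℂ := fun z => (∑ k ∈ Finset.range (n + 1), (a k : ℂ) * (z ^ 2) ^ k)
      - (Complex.I * z) ^ (2 * n + 1) - lam with hQ
  by_contra hA
  push_neg at hA
  obtain ⟨t₁, ht₁⟩ := hne
  -- pointwise computation of the imaginary part
  have key : ∀ t : ℝ, s * (w ^ 2 * Q (w * t)).im
      = (∑ k ∈ Finset.range (n + 1), s * (a k * t ^ (2 * k) * (w ^ (2 * k + 2)).im))
        - s * (lam * w ^ 2).im := by
    intro t
    have hsum : w ^ 2 * (∑ k ∈ Finset.range (n + 1), (a k : ℂ) * ((w * (t:ℂ)) ^ 2) ^ k)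
        = ∑ k ∈ Finset.range (n + 1), ((a k * t ^ (2 * k) : ℝ) : ℂ) * w ^ (2 * k + 2) := by
      rw [Finset.mul_sum]
      apply Finset.sum_congr rfl
      intro k _
      push_cast
      rw [show ((w * (t:ℂ)) ^ 2) ^ k = w ^ (2 * k) * (t:ℂ) ^ (2 * k) by
          rw [mul_pow, mul_pow, ← pow_mul, ← pow_mul],
        show w ^ (2 * k + 2) = w ^ (2 * k) * w ^ 2 from pow_add w (2 * k) 2]
      ring
    have hoddt : w ^ 2 * (Complex.I * (w * (t:ℂ))) ^ (2 * n + 1)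
        = ((t ^ (2 * n + 1) : ℝ) : ℂ) * (Complex.I ^ (2 * n + 1) * w ^ (2 * n + 3)) := by
      push_cast
      rw [show (Complex.I * (w * (t:ℂ))) ^ (2 * n + 1)
          = Complex.I ^ (2 * n + 1) * (w ^ (2 * n + 1) * (t:ℂ) ^ (2 * n + 1)) by
          rw [mul_pow, mul_pow],
        show w ^ (2 * n + 3) = w ^ (2 * n + 1) * w ^ 2 from pow_add w (2 * n + 1) 2]
      ring
    have e1 : w ^ 2 * Q (w * t)
        = (∑ k ∈ Finset.range (n + 1), ((a k * t ^ (2 * k) : ℝ) : ℂ) * w ^ (2 * k + 2))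
          - ((t ^ (2 * n + 1) : ℝ) : ℂ) * (Complex.I ^ (2 * n + 1) * w ^ (2 * n + 3))
          - lam * w ^ 2 := by
      simp only [hQ]
      rw [show w ^ 2 * ((∑ k ∈ Finset.range (n + 1), (a k : ℂ) * ((w * (t:ℂ)) ^ 2) ^ k)
          - (Complex.I * (w * (t:ℂ))) ^ (2 * n + 1) - lam)
        = w ^ 2 * (∑ k ∈ Finset.range (n + 1), (a k : ℂ) * ((w * (t:ℂ)) ^ 2) ^ k)
          - w ^ 2 * (Complex.I * (w * (t:ℂ))) ^ (2 * n + 1) - lam * w ^ 2 from by ring,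
        hsum, hoddt]
    have e2 : (w ^ 2 * Q (w * t)).im
        = (∑ k ∈ Finset.range (n + 1), a k * t ^ (2 * k) * (w ^ (2 * k + 2)).im)
          - (lam * w ^ 2).im := by
      rw [e1]
      simp only [Complex.sub_im, Complex.im_sum, Complex.mul_im, Complex.ofReal_re,
        Complex.ofReal_im, zero_mul, add_zero, hodd, mul_zero, sub_zero]
    rw [e2, mul_sub, Finset.mul_sum]
  -- continuity facts
  have hu' : Differentiable ℂ (deriv u) := deriv_entire u hu
  have hwt : Continuous fun t : ℝ => w * (t : ℂ) := by continuity
  have hvC : Continuous fun t : ℝ => u (w * t) := hu.continuous.comp hwt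
  have hdvC : Continuous fun t : ℝ => w * deriv u (w * t) :=
    continuous_const.mul (hu'.continuous.comp hwt)
  have hQC : Continuous Q := by
    rw [hQ]
    apply Continuous.sub
    apply Continuous.sub
    · exact continuous_finset_sum _ fun k _ => continuous_const.mul (by continuity)
    · continuity
    · exact continuous_const
  -- apply no_escape
  refine no_escape
    (fun t => s * ((starRingEnd ℂ) (u (w * t)) * (w * deriv u (w * t))).im)
    (fun t => s * ((w ^ 2 * Q (w * t)).im * Complex.normSq (u (w * t))))
    (fun t => (-(s * (lam * w ^ 2).im)) * Complex.normSq (u (w * t)))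
    (C ^ 2) (2 * c) κ (by linarith) hκ ?_ ?_ ?_ ?_ ?_ t₁ ?_ ?_
  · -- HasDerivAt
    intro t
    have hG := hasDerivAt_G u Q hu hode w t
    have him := (Complex.imCLM.hasFDerivAt.comp_hasDerivAt t hG).const_mul s
    convert him using 1
    · rfl
    · rfl
    · rfl
    simp [Complex.add_im, Complex.mul_im]
  · -- continuity of D
    apply Continuous.mul continuous_const
    exact ((Complex.continuous_im.comp (continuous_const.mul (hQC.comp hwt))).mul
      (Complex.continuous_normSq.comp hvC))
  · -- continuity of E
    exact continuous_const.mul (Complex.continuous_normSq.comp hvC)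
  · -- E ≤ D
    intro t
    have h1 : s * ((w ^ 2 * Q (w * t)).im * Complex.normSq (u (w * t)))
        = (s * (w ^ 2 * Q (w * t)).im) * Complex.normSq (u (w * t)) := by ring
    rw [h1, key t]
    have hsum0 : 0 ≤ ∑ k ∈ Finset.range (n + 1), s * (a k * t ^ (2 * k) * (w ^ (2 * k + 2)).im) := by
      apply Finset.sum_nonneg
      intro k hk'
      have hk2 := hk k (Nat.lt_succ_iff.mp (Finset.mem_range.mp hk'))
      have ht2 : (0:ℝ) ≤ t ^ (2 * k) := by
        rw [pow_mul]; positivity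
      have := ha k (Nat.lt_succ_iff.mp (Finset.mem_range.mp hk'))
      calc (0:ℝ) ≤ (a k * t ^ (2 * k)) * (s * (w ^ (2 * k + 2)).im) := by positivity
      _ = s * (a k * t ^ (2 * k) * (w ^ (2 * k + 2)).im) := by ring
    have hnsq : (0:ℝ) ≤ Complex.normSq (u (w * t)) := Complex.normSq_nonneg _
    nlinarith
  · -- 0 ≤ E
    intro t
    have hnsq : (0:ℝ) ≤ Complex.normSq (u (w * t)) := Complex.normSq_nonneg _
    nlinarith
  · -- 0 < E t₁
    have hnsq : (0:ℝ) < Complex.normSq (u (w * t₁)) := Complex.normSq_pos.mpr ht₁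
    nlinarith
  · -- error bound
    intro t
    have hb := hray t
    have h1 : |s * ((starRingEnd ℂ) (u (w * t)) * (w * deriv u (w * t))).im|
        ≤ ‖u (w * t)‖ * ‖deriv u (w * t)‖ := by
      rw [abs_mul, hs, one_mul]
      calc |((starRingEnd ℂ) (u (w * t)) * (w * deriv u (w * t))).im|
          ≤ ‖(starRingEnd ℂ) (u (w * t)) * (w * deriv u (w * t))‖ :=
            Complex.abs_im_le_norm _
      _ = ‖u (w * t)‖ * ‖deriv u (w * t)‖ := by
          simp [map_mul, Complex.norm_conj, hw]
    have h2 : ‖u (w * t)‖ * ‖deriv u (w * t)‖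
        ≤ (C * Real.exp (-c * |t| ^ κ)) ^ 2 := by
      nlinarith [norm_nonneg (u (w * t)), norm_nonneg (deriv u (w * t))]
    have h3 : (C * Real.exp (-c * |t| ^ κ)) ^ 2 = C ^ 2 * Real.exp (-(2 * c) * |t| ^ κ) := by
      rw [mul_pow, pow_two (Real.exp _), ← Real.exp_add]
      ring_nf
    linarith

lemma re_pos (n : ℕ) (a : ℕ → ℝ) (ha : ∀ k, k ≤ n → 0 ≤ a k) (lam : ℂ) (u : ℂ → ℂ)
    (hu : Differentiable ℂ u)
    (hode : ∀ z : ℂ, iteratedDeriv 2 u z =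
      ((∑ k ∈ Finset.range (n + 1), (a k : ℂ) * (z ^ 2) ^ k)
        - (Complex.I * z) ^ (2 * n + 1) - lam) * u z)
    (hne : ∃ t : ℝ, deriv u ((1:ℂ) * t) ≠ 0)
    (C c κ : ℝ) (hc : 0 < c) (hκ : 0 < κ)
    (hray : ∀ t : ℝ, ‖u ((1:ℂ) * t)‖ + ‖deriv u ((1:ℂ) * t)‖
      ≤ C * Real.exp (-c * |t| ^ κ)) :
    0 < lam.re := by
  set Q : ℂ → ℂ := fun z => (∑ k ∈ Finset.range (n + 1), (a k : ℂ) * (z ^ 2) ^ k)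
      - (Complex.I * z) ^ (2 * n + 1) - lam with hQ
  by_contra hA
  push_neg at hA
  obtain ⟨t₁, ht₁⟩ := hne
  -- real part of Q on the real axis
  have key : ∀ t : ℝ, (Q ((1:ℂ) * t)).re
      = (∑ k ∈ Finset.range (n + 1), a k * t ^ (2 * k)) - lam.re := by
    intro t
    have hI : ((Complex.I * ((1:ℂ) * t)) ^ (2 * n + 1)).re = 0 := by
      rw [show Complex.I * ((1:ℂ) * (t:ℂ)) = (t:ℂ) * Complex.I by ring, mul_pow,
        show Complex.I ^ (2 * n + 1) = (((-1:ℝ) ^ n : ℝ) : ℂ) * Complex.I by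
          rw [pow_succ, pow_mul, Complex.I_sq]; push_cast; ring]
      simp [Complex.mul_re, Complex.mul_im, ← Complex.ofReal_pow]
    have hsum : ∀ k, (((a k : ℂ)) * ((((1:ℂ) * t) ^ 2) ^ k)).re = a k * t ^ (2 * k) := by
      intro k
      rw [show (((1:ℂ) * (t:ℂ)) ^ 2) ^ k = (((t ^ (2 * k) : ℝ)) : ℂ) by
        push_cast; rw [← pow_mul]; norm_num, ← Complex.ofReal_mul]
      exact Complex.ofReal_re _
    simp only [hQ, Complex.sub_re, Complex.re_sum, hI, sub_zero]
    congr 1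
    · exact Finset.sum_congr rfl fun k _ => hsum k
  -- continuity facts
  have hu' : Differentiable ℂ (deriv u) := deriv_entire u hu
  have hwt : Continuous fun t : ℝ => (1:ℂ) * (t : ℂ) := by continuity
  have hvC : Continuous fun t : ℝ => u ((1:ℂ) * t) := hu.continuous.comp hwt
  have hdC : Continuous fun t : ℝ => deriv u ((1:ℂ) * t) := hu'.continuous.comp hwt
  have hQC : Continuous Q := by
    rw [hQ]
    apply Continuous.sub
    apply Continuous.sub
    · exact continuous_finset_sum _ fun k _ => continuous_const.mul (by continuity)
    · continuity
    · exact continuous_const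
  refine no_escape
    (fun t => ((starRingEnd ℂ) (u ((1:ℂ) * t)) * ((1:ℂ) * deriv u ((1:ℂ) * t))).re)
    (fun t => Complex.normSq ((1:ℂ) * deriv u ((1:ℂ) * t))
      + (Q ((1:ℂ) * t)).re * Complex.normSq (u ((1:ℂ) * t)))
    (fun t => Complex.normSq (deriv u ((1:ℂ) * t)) + (-lam.re) * Complex.normSq (u ((1:ℂ) * t)))
    (C ^ 2) (2 * c) κ (by linarith) hκ ?_ ?_ ?_ ?_ ?_ t₁ ?_ ?_
  · intro t
    have hG := hasDerivAt_G u Q hu hode 1 t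
    have hre := Complex.reCLM.hasFDerivAt.comp_hasDerivAt t hG
    convert hre using 1
    · rfl
    · rfl
    · rfl
    simp [Complex.add_re, Complex.mul_re]
  · exact (Complex.continuous_normSq.comp (continuous_const.mul hdC)).add
      ((Complex.continuous_re.comp (hQC.comp hwt)).mul (Complex.continuous_normSq.comp hvC))
  · exact (Complex.continuous_normSq.comp hdC).add
      (continuous_const.mul (Complex.continuous_normSq.comp hvC))
  · intro t
    rw [key t]
    have hsum0 : 0 ≤ ∑ k ∈ Finset.range (n + 1), a k * t ^ (2 * k) := by
      apply Finset.sum_nonneg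
      intro k hk'
      have := ha k (Nat.lt_succ_iff.mp (Finset.mem_range.mp hk'))
      have ht2 : (0:ℝ) ≤ t ^ (2 * k) := by rw [pow_mul]; positivity
      positivity
    have hnsq : (0:ℝ) ≤ Complex.normSq (u ((1:ℂ) * t)) := Complex.normSq_nonneg _
    have : Complex.normSq ((1:ℂ) * deriv u ((1:ℂ) * t))
        = Complex.normSq (deriv u ((1:ℂ) * t)) := by rw [one_mul]
    nlinarith
  · intro t
    have h1 : (0:ℝ) ≤ Complex.normSq (u ((1:ℂ) * t)) := Complex.normSq_nonneg _
    have h2 : (0:ℝ) ≤ Complex.normSq (deriv u ((1:ℂ) * t)) := Complex.normSq_nonneg _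
    nlinarith
  · have h1 : (0:ℝ) ≤ Complex.normSq (u ((1:ℂ) * t₁)) := Complex.normSq_nonneg _
    have h2 : (0:ℝ) < Complex.normSq (deriv u ((1:ℂ) * t₁)) := Complex.normSq_pos.mpr ht₁
    nlinarith
  · intro t
    have hb := hray t
    have h1 : |((starRingEnd ℂ) (u ((1:ℂ) * t)) * ((1:ℂ) * deriv u ((1:ℂ) * t))).re|
        ≤ ‖u ((1:ℂ) * t)‖ * ‖deriv u ((1:ℂ) * t)‖ := by
      calc |((starRingEnd ℂ) (u ((1:ℂ) * t)) * ((1:ℂ) * deriv u ((1:ℂ) * t))).re|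
          ≤ ‖(starRingEnd ℂ) (u ((1:ℂ) * t)) * ((1:ℂ) * deriv u ((1:ℂ) * t))‖ :=
            Complex.abs_re_le_norm _
      _ = ‖u ((1:ℂ) * t)‖ * ‖deriv u ((1:ℂ) * t)‖ := by
          simp [map_mul, Complex.norm_conj]
    have h2 : ‖u ((1:ℂ) * t)‖ * ‖deriv u ((1:ℂ) * t)‖
        ≤ (C * Real.exp (-c * |t| ^ κ)) ^ 2 := by
      nlinarith [norm_nonneg (u ((1:ℂ) * t)), norm_nonneg (deriv u ((1:ℂ) * t))]
    have h3 : (C * Real.exp (-c * |t| ^ κ)) ^ 2 = C ^ 2 * Real.exp (-(2 * c) * |t| ^ κ) := by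
      rw [mul_pow, pow_two (Real.exp _), ← Real.exp_add]
      ring_nf
    linarith


/-- If `lam` is an eigenvalue of
`-u'' + (P(x²) - (ix)^{2n+1}) u = lam·u`, where `P(X) = ∑_{k=0}^n a_k X^k` has all
nonnegative real coefficients and `n ≥ 1`, then `lam ≠ 0`, `Re lam > 0` and
`|arg lam| ≤ π/(2n+3)`, i.e. `|Im lam| ≤ tan(π/(2n+3)) · Re lam`. -/
theorem eigenvalues_lie_in_sector
    (n : ℕ) (hn : 1 ≤ n) (a : ℕ → ℝ) (ha : ∀ k, k ≤ n → 0 ≤ a k)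
    (lam : ℂ) (u : ℂ → ℂ)
    (hu_entire : Differentiable ℂ u)
    (hu_ne : u ≠ 0)
    (hode : ∀ z : ℂ, iteratedDeriv 2 u z =
      ((∑ k ∈ Finset.range (n + 1), (a k : ℂ) * (z ^ 2) ^ k)
        - (Complex.I * z) ^ (2 * n + 1) - lam) * u z)
    (hdecay : ∃ C > (0 : ℝ), ∃ c > (0 : ℝ), ∃ κ > (0 : ℝ), ∀ z : ℂ,
      (|Complex.arg z| ≤ π / (2 * (2 * (n : ℝ) + 3)) ∨
        |Complex.arg (-z)| ≤ π / (2 * (2 * (n : ℝ) + 3))) →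
      ‖u z‖ + ‖deriv u z‖
        ≤ C * Real.exp (-c * ‖z‖ ^ κ)) :
    lam ≠ 0 ∧ 0 < lam.re ∧ |lam.im| ≤ Real.tan (π / (2 * (n : ℝ) + 3)) * lam.re := by
  obtain ⟨C, hC, c, hc, κ, hκ, hdec⟩ := hdecay
  set α : ℝ := π / (2 * (2 * (n : ℝ) + 3)) with hαdef
  set β : ℝ := π / (2 * (n : ℝ) + 3) with hβdef
  have hd3 : (0:ℝ) < 2 * (n:ℝ) + 3 := by positivity
  have hα0 : 0 < α := by rw [hαdef]; positivity
  have hβ0 : 0 < β := by rw [hβdef]; positivity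
  have hβα : β = 2 * α := by rw [hαdef, hβdef]; field_simp
  have hβlt : β < π / 2 := by
    rw [hβdef]
    apply div_lt_div_of_pos_left Real.pi_pos (by norm_num)
    nlinarith [(Nat.one_le_cast (α := ℝ)).mpr hn]
  -- decay along rays
  have hray : ∀ θ : ℝ, |θ| ≤ α → ∀ t : ℝ,
      ‖u (Complex.exp ((θ:ℂ) * Complex.I) * t)‖
        + ‖deriv u (Complex.exp ((θ:ℂ) * Complex.I) * t)‖
        ≤ C * Real.exp (-c * |t| ^ κ) := by
    intro θ hθ t
    set w : ℂ := Complex.exp ((θ:ℂ) * Complex.I) with hwdef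
    have hw1 : ‖w‖ = 1 := Complex.norm_exp_ofReal_mul_I θ
    have hαπ : α < π := by
      calc α < β := by rw [hβα]; linarith
      _ < π / 2 := hβlt
      _ < π := by linarith [Real.pi_pos]
    have hargw : Complex.arg w = θ := by
      rw [hwdef, Complex.exp_mul_I, Complex.arg_cos_add_sin_mul_I]
      constructor
      · linarith [neg_abs_le θ]
      · linarith [le_abs_self θ]
    have habs : ‖w * t‖ = |t| := by
      rw [norm_mul, hw1, one_mul, Complex.norm_real, Real.norm_eq_abs]
    have harg : |Complex.arg (w * t)| ≤ α ∨ |Complex.arg (-(w * t))| ≤ α := by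
      rcases lt_trichotomy t 0 with h | h | h
      · right
        rw [show -(w * (t:ℂ)) = ((-t : ℝ) : ℂ) * w by push_cast; ring,
          Complex.arg_real_mul w (by linarith), hargw]
        exact hθ
      · left
        rw [h]
        simp [Complex.arg_zero]
        linarith
      · left
        rw [show w * (t:ℂ) = ((t : ℝ) : ℂ) * w from by ring,
          Complex.arg_real_mul w h, hargw]
        exact hθ
    have := hdec (w * t) harg
    rwa [habs] at this
  -- nonvanishing of u along every ray
  have hneline : ∀ w : ℂ, w ≠ 0 → ∃ t : ℝ, u (w * t) ≠ 0 := by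
    intro w hw
    by_contra h
    push_neg at h
    exact hu_ne (line_zero u hu_entire w hw h)
  -- nonvanishing of deriv u on the real axis
  have hned : ∃ t : ℝ, deriv u ((1:ℂ) * t) ≠ 0 := by
    by_contra h
    push_neg at h
    have hz : deriv u = 0 := line_zero (deriv u) (deriv_entire u hu_entire) 1 one_ne_zero h
    have hconst : ∀ x y : ℝ, u ((1:ℂ) * x) = u ((1:ℂ) * y) := by
      have hder : ∀ t : ℝ, HasDerivAt (fun s : ℝ => u ((1:ℂ) * s)) 0 t := by
        intro t
        have h1 := ray_deriv u hu_entire 1 t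
        rwa [hz, Pi.zero_apply, mul_zero] at h1
      exact is_const_of_deriv_eq_zero (fun t => (hder t).differentiableAt)
        (fun t => (hder t).deriv)
    have hray1 := hray 0 (by simp; linarith)
    simp only [Complex.ofReal_zero, zero_mul, Complex.exp_zero] at hray1
    rcases eq_or_ne (u ((1:ℂ) * (0:ℝ))) 0 with h0 | h0
    · apply hu_ne
      apply line_zero u hu_entire 1 one_ne_zero
      intro t
      rw [hconst t 0, h0]
    · have hpos : 0 < ‖u ((1:ℂ) * (0:ℝ))‖ := by
        simpa [norm_pos_iff] using h0
      have htend : Tendsto (fun T : ℝ => C * Real.exp (-c * T ^ κ)) atTop (nhds 0) := by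
        have h1 : Tendsto (fun T : ℝ => -c * T ^ κ) atTop atBot :=
          (tendsto_rpow_atTop hκ).const_mul_atTop_of_neg (by linarith)
        simpa using (Real.tendsto_exp_atBot.comp h1).const_mul C
      obtain ⟨T, hT1, hT2⟩ := ((htend.eventually_lt_const hpos).and
        (eventually_ge_atTop (0:ℝ))).exists
      have hb := hray1 T
      rw [hconst T 0] at hb
      rw [_root_.abs_of_nonneg hT2] at hb
      have := norm_nonneg (deriv u ((1:ℂ) * T))
      linarith
  -- real part positive
  have hre : 0 < lam.re := by
    have hray1 := hray 0 (by simp; linarith)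
    simp only [Complex.ofReal_zero, zero_mul, Complex.exp_zero] at hray1
    exact re_pos n a ha lam u hu_entire hode hned C c κ hc hκ hray1
  -- power and trig helpers
  have hpow : ∀ (θ : ℝ) (m : ℕ), (Complex.exp ((θ:ℂ) * Complex.I)) ^ m
      = Complex.exp ((((m : ℝ) * θ : ℝ) : ℂ) * Complex.I) := by
    intro θ m
    rw [← Complex.exp_nat_mul]
    push_cast
    ring_nf
  have hsin_nonneg : ∀ k : ℕ, k ≤ n → 0 ≤ Real.sin ((2 * (k:ℝ) + 2) * α) := by
    intro k hk
    apply Real.sin_nonneg_of_nonneg_of_le_pi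
    · positivity
    · have h1 : (2 * (k:ℝ) + 2) * α ≤ (2 * (n:ℝ) + 2) * α := by
        have : (k:ℝ) ≤ (n:ℝ) := Nat.cast_le.mpr hk
        nlinarith
      have h2 : (2 * (n:ℝ) + 2) * α ≤ π := by
        have h3 : (2 * (n:ℝ) + 2) / (2 * (2 * (n:ℝ) + 3)) ≤ 1 := by
          rw [div_le_one (by positivity)]
          linarith
        calc (2 * (n:ℝ) + 2) * α = ((2 * (n:ℝ) + 2) / (2 * (2 * (n:ℝ) + 3))) * π := by
              rw [hαdef]; ring
        _ ≤ 1 * π := mul_le_mul_of_nonneg_right h3 Real.pi_pos.le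
        _ = π := one_mul π
      linarith
  -- imaginary parts of powers
  have him : ∀ (θ : ℝ) (m : ℕ), ((Complex.exp ((θ:ℂ) * Complex.I)) ^ m).im
      = Real.sin ((m:ℝ) * θ) := by
    intro θ m
    rw [hpow θ m]
    exact Complex.exp_ofReal_mul_I_im _
  have hpowval : ∀ θ : ℝ, (Complex.exp ((θ:ℂ) * Complex.I)) ^ (2 * n + 3)
      = Complex.exp ((((2 * (n:ℝ) + 3) * θ : ℝ) : ℂ) * Complex.I) := by
    intro θ
    rw [hpow θ (2 * n + 3)]
    norm_num
  have hαval : (2 * (n:ℝ) + 3) * α = π / 2 := by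
    rw [hαdef]
    field_simp
  -- the sector inequalities coming from the two rotated rays
  have hIpow : (Complex.I ^ (2 * n + 1) * Complex.I) = (((-1:ℝ) ^ (n + 1) : ℝ) : ℂ) := by
    rw [← pow_succ, show 2 * n + 1 + 1 = 2 * (n + 1) from by ring, pow_mul, Complex.I_sq]
    push_cast
    ring
  have h₁ : 0 ≤ (lam * (Complex.exp ((α:ℂ) * Complex.I)) ^ 2).im := by
    have hodd₁ : (Complex.I ^ (2 * n + 1)
        * (Complex.exp ((α:ℂ) * Complex.I)) ^ (2 * n + 3)).im = 0 := by
      rw [hpowval α, hαval, Complex.exp_mul_I, ← Complex.ofReal_cos, ← Complex.ofReal_sin,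
        Real.cos_pi_div_two, Real.sin_pi_div_two, Complex.ofReal_zero, Complex.ofReal_one,
        zero_add, one_mul, hIpow]
      rw [show ((((-1:ℝ) ^ (n + 1) : ℝ)) : ℂ) = (((-1:ℝ) ^ (n + 1) : ℝ) : ℂ) from rfl,
        Complex.ofReal_im]
    have hk₁ : ∀ k, k ≤ n → 0 ≤ (1:ℝ) * ((Complex.exp ((α:ℂ) * Complex.I)) ^ (2 * k + 2)).im := by
      intro k hk
      rw [one_mul, him]
      have : ((2 * k + 2 : ℕ) : ℝ) = 2 * (k:ℝ) + 2 := by push_cast; ring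
      rw [this]
      exact hsin_nonneg k hk
    have h := master n a ha lam u hu_entire hode (Complex.exp ((α:ℂ) * Complex.I))
      (Complex.norm_exp_ofReal_mul_I α) 1 (by norm_num) hk₁ hodd₁
      (hneline _ (Complex.exp_ne_zero _)) C c κ hc hκ
      (hray α (by rw [_root_.abs_of_pos hα0]))
    linarith
  have h₂ : (lam * (Complex.exp (((-α : ℝ):ℂ) * Complex.I)) ^ 2).im ≤ 0 := by
    have hodd₂ : (Complex.I ^ (2 * n + 1)
        * (Complex.exp (((-α : ℝ):ℂ) * Complex.I)) ^ (2 * n + 3)).im = 0 := by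
      rw [hpowval (-α), show (2 * (n:ℝ) + 3) * (-α) = -(π / 2) from by rw [← hαval]; ring,
        Complex.ofReal_neg, neg_mul, Complex.exp_neg]
      rw [Complex.exp_mul_I, ← Complex.ofReal_cos, ← Complex.ofReal_sin,
        Real.cos_pi_div_two, Real.sin_pi_div_two, Complex.ofReal_zero, Complex.ofReal_one,
        zero_add, one_mul, Complex.inv_I]
      rw [mul_neg, Complex.neg_im, hIpow, Complex.ofReal_im, neg_zero]
    have hk₂ : ∀ k, k ≤ n →
        0 ≤ (-1:ℝ) * ((Complex.exp (((-α : ℝ):ℂ) * Complex.I)) ^ (2 * k + 2)).im := by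
      intro k hk
      rw [him]
      have : ((2 * k + 2 : ℕ) : ℝ) * (-α) = -((2 * (k:ℝ) + 2) * α) := by push_cast; ring
      rw [this, Real.sin_neg]
      have := hsin_nonneg k hk
      linarith
    have h := master n a ha lam u hu_entire hode (Complex.exp (((-α : ℝ):ℂ) * Complex.I))
      (Complex.norm_exp_ofReal_mul_I (-α)) (-1) (by norm_num) hk₂ hodd₂
      (hneline _ (Complex.exp_ne_zero _)) C c κ hc hκ
      (hray (-α) (by rw [abs_neg, _root_.abs_of_pos hα0]))
    linarith
  -- translate into coordinates
  have hsq : ∀ θ : ℝ, (Complex.exp ((θ:ℂ) * Complex.I)) ^ 2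
      = Complex.exp (((2 * θ : ℝ) : ℂ) * Complex.I) := by
    intro θ
    rw [hpow θ 2]
    norm_num
  have e₁ : (lam * (Complex.exp ((α:ℂ) * Complex.I)) ^ 2).im
      = lam.re * Real.sin β + lam.im * Real.cos β := by
    rw [hsq α, show (2 * α : ℝ) = β from by rw [hβα], Complex.mul_im,
      Complex.exp_ofReal_mul_I_re, Complex.exp_ofReal_mul_I_im]
  have e₂ : (lam * (Complex.exp (((-α : ℝ):ℂ) * Complex.I)) ^ 2).im
      = -(lam.re * Real.sin β) + lam.im * Real.cos β := by
    rw [hsq (-α), show (2 * (-α) : ℝ) = -β from by rw [hβα]; ring, Complex.mul_im,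
      Complex.exp_ofReal_mul_I_re, Complex.exp_ofReal_mul_I_im, Real.sin_neg, Real.cos_neg]
    ring
  rw [e₁] at h₁
  rw [e₂] at h₂
  have hcβ : 0 < Real.cos β := Real.cos_pos_of_mem_Ioo ⟨by linarith, hβlt⟩
  refine ⟨fun h => by rw [h] at hre; simp at hre, hre, ?_⟩
  rw [Real.tan_eq_sin_div_cos, abs_le]
  constructor
  · rw [div_mul_eq_mul_div, ← neg_div, div_le_iff₀ hcβ]
    nlinarith
  · rw [div_mul_eq_mul_div, le_div_iff₀ hcβ]
    linarith
end

section
/- (Green's transform.) Let z : [c, d] → ℂ be a continuously differentiable curve with z'(t) ≠ 0 for all t ∈ [c, d], written z(t) = x(t) + i·y(t) with x, y real-valued. Then: (1) Re(u'(z(d))·conj(u(z(d)))) − Re(u'(z(c))·conj(u(z(c)))) = ∫_c^d x'(t)·|u'(z(t))|² dt + ∫_c^d [x'(t)·Re(i·z(t)³ − λ) − y'(t)·Im(i·z(t)³ − λ)]·|u(z(t))|² dt; and (2) Im(u'(z(d))·conj(u(z(d)))) − Im(u'(z(c))·conj(u(z(c)))) = −∫_c^d y'(t)·|u'(z(t))|²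 dt + ∫_c^d [y'(t)·Re(i·z(t)³ − λ) + x'(t)·Im(i·z(t)³ − λ)]·|u(z(t))|² dt. -/
open Complex Real ComplexConjugate

/-- **Green's transform.** Let `u` be entire with
`u''(z) = (iz³ - lam)·u(z)`, and let `z : [c,d] → ℂ` be a continuously differentiable
curve with nonvanishing derivative `z'`.  Writing `z(t) = x(t) + i y(t)`, one has
`Re(u'·conj u)|_{z(c)}^{z(d)} = ∫_c^d x'|u'(z(t))|² dt
  + ∫_c^d [x'·Re(iz³-lam) - y'·Im(iz³-lam)]·|u(z(t))|² dt`
and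
`Im(u'·conj u)|_{z(c)}^{z(d)} = -∫_c^d y'|u'(z(t))|² dt
  + ∫_c^d [y'·Re(iz³-lam) + x'·Im(iz³-lam)]·|u(z(t))|² dt`. -/
theorem greens_transform
    (lam : ℂ) (u : ℂ → ℂ)
    (hu_entire : Differentiable ℂ u)
    (hode : ∀ w : ℂ, iteratedDeriv 2 u w = (Complex.I * w ^ 3 - lam) * u w)
    (c d : ℝ) (hcd : c ≤ d) (z z' : ℝ → ℂ)
    (hz : ∀ t ∈ Set.Icc c d, HasDerivAt z (z' t) t)
    (hz' : ContinuousOn z' (Set.Icc c d))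
    (hz0 : ∀ t ∈ Set.Icc c d, z' t ≠ 0) :
    ((deriv u (z d) * conj (u (z d))).re - (deriv u (z c) * conj (u (z c))).re
      = (∫ t in c..d, (z' t).re * ‖deriv u (z t)‖ ^ 2)
        + ∫ t in c..d,
            ((z' t).re * (Complex.I * (z t) ^ 3 - lam).re
              - (z' t).im * (Complex.I * (z t) ^ 3 - lam).im)
            * ‖u (z t)‖ ^ 2) ∧
    ((deriv u (z d) * conj (u (z d))).im - (deriv u (z c) * conj (u (z c))).im
      = -(∫ t in c..d, (z' t).im * ‖deriv u (z t)‖ ^ 2)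
        + ∫ t in c..d,
            ((z' t).im * (Complex.I * (z t) ^ 3 - lam).re
              + (z' t).re * (Complex.I * (z t) ^ 3 - lam).im)
            * ‖u (z t)‖ ^ 2) := by
  have huI : Set.uIcc c d = Set.Icc c d := Set.uIcc_of_le hcd
  have hud : Differentiable ℂ (deriv u) :=
    ((contDiff_infty_iff_deriv.mp hu_entire.contDiff).2.differentiable (by simp))
  set F : ℝ → ℂ := fun t => deriv u (z t) * conj (u (z t)) with hFdef
  set F' : ℝ → ℂ := fun t =>
      ((Complex.I * (z t) ^ 3 - lam) * u (z t) * z' t) * conj (u (z t))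
        + deriv u (z t) * conj (deriv u (z t) * z' t) with hF'def
  have hF : ∀ t ∈ Set.Icc c d, HasDerivAt F (F' t) t := by
    intro t ht
    have h1 : HasDerivAt (fun s => u (z s)) (deriv u (z t) * z' t) t := by
      have := ((hu_entire (z t)).hasDerivAt).scomp t (hz t ht)
      simpa [smul_eq_mul, mul_comm, Function.comp_def] using this
    have h2 : HasDerivAt (fun s => deriv u (z s))
        ((Complex.I * (z t) ^ 3 - lam) * u (z t) * z' t) t := by
      have hd2 : HasDerivAt (deriv u) (deriv (deriv u) (z t)) (z t) :=
        (hud (z t)).hasDerivAt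
      have := hd2.scomp t (hz t ht)
      have hiter : deriv (deriv u) (z t) = (Complex.I * (z t) ^ 3 - lam) * u (z t) := by
        rw [← hode (z t), iteratedDeriv_succ, iteratedDeriv_one]
      rw [hiter] at this
      simpa [smul_eq_mul, mul_comm, mul_assoc, Function.comp_def] using this
    have h3 : HasDerivAt (fun s => conj (u (z s))) (conj (deriv u (z t) * z' t)) t := by
      simpa using h1.star
    simpa [hFdef, hF'def, Pi.mul_def] using h2.mul h3
  have hzc : ContinuousOn z (Set.Icc c d) := fun t ht =>
    (hz t ht).continuousAt.continuousWithinAt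
  -- integrands
  set A : ℝ → ℝ := fun t => (z' t).re * ‖deriv u (z t)‖ ^ 2 with hA
  set A' : ℝ → ℝ := fun t => (z' t).im * ‖deriv u (z t)‖ ^ 2 with hA'
  set B : ℝ → ℝ := fun t =>
      ((z' t).re * (Complex.I * (z t) ^ 3 - lam).re
        - (z' t).im * (Complex.I * (z t) ^ 3 - lam).im) * ‖u (z t)‖ ^ 2 with hB
  set B' : ℝ → ℝ := fun t =>
      ((z' t).im * (Complex.I * (z t) ^ 3 - lam).re
        + (z' t).re * (Complex.I * (z t) ^ 3 - lam).im) * ‖u (z t)‖ ^ 2 with hB'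
  have hq : ContinuousOn (fun t => Complex.I * (z t) ^ 3 - lam) (Set.Icc c d) :=
    (continuousOn_const.mul (hzc.pow 3)).sub continuousOn_const
  have huz : ContinuousOn (fun t => u (z t)) (Set.Icc c d) :=
    hu_entire.continuous.comp_continuousOn hzc
  have hu'z : ContinuousOn (fun t => deriv u (z t)) (Set.Icc c d) :=
    hud.continuous.comp_continuousOn hzc
  have hAc : ContinuousOn A (Set.Icc c d) :=
    (Complex.continuous_re.comp_continuousOn hz').mul
      ((continuous_norm.comp_continuousOn hu'z).pow 2)
  have hA'c : ContinuousOn A' (Set.Icc c d) :=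
    (Complex.continuous_im.comp_continuousOn hz').mul
      ((continuous_norm.comp_continuousOn hu'z).pow 2)
  have hBc : ContinuousOn B (Set.Icc c d) :=
    (((Complex.continuous_re.comp_continuousOn hz').mul
        (Complex.continuous_re.comp_continuousOn hq)).sub
      ((Complex.continuous_im.comp_continuousOn hz').mul
        (Complex.continuous_im.comp_continuousOn hq))).mul
      ((continuous_norm.comp_continuousOn huz).pow 2)
  have hB'c : ContinuousOn B' (Set.Icc c d) :=
    (((Complex.continuous_im.comp_continuousOn hz').mul
        (Complex.continuous_re.comp_continuousOn hq)).add
      ((Complex.continuous_re.comp_continuousOn hz').mul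
        (Complex.continuous_im.comp_continuousOn hq))).mul
      ((continuous_norm.comp_continuousOn huz).pow 2)
  have hAi : IntervalIntegrable A MeasureTheory.volume c d :=
    (huI ▸ hAc : ContinuousOn A (Set.uIcc c d)).intervalIntegrable
  have hA'i : IntervalIntegrable A' MeasureTheory.volume c d :=
    (huI ▸ hA'c : ContinuousOn A' (Set.uIcc c d)).intervalIntegrable
  have hBi : IntervalIntegrable B MeasureTheory.volume c d :=
    (huI ▸ hBc : ContinuousOn B (Set.uIcc c d)).intervalIntegrable
  have hB'i : IntervalIntegrable B' MeasureTheory.volume c d :=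
    (huI ▸ hB'c : ContinuousOn B' (Set.uIcc c d)).intervalIntegrable
  have hre : ∀ t, (F' t).re = A t + B t := by
    intro t
    simp only [hF'def, hA, hB, Complex.sq_norm, Complex.add_re, Complex.mul_re, Complex.mul_im,
      Complex.conj_re, Complex.conj_im, Complex.normSq_apply]
    ring
  have him : ∀ t, (F' t).im = -A' t + B' t := by
    intro t
    simp only [hF'def, hA', hB', Complex.sq_norm, Complex.add_im, Complex.mul_re, Complex.mul_im,
      Complex.conj_re, Complex.conj_im, Complex.normSq_apply]
    ring
  constructor
  · have hftc : ∫ t in c..d, (A t + B t) = (F d).re - (F c).re := by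
      apply intervalIntegral.integral_eq_sub_of_hasDerivAt
      · intro t ht
        rw [huI] at ht
        have := (Complex.reCLM.hasFDerivAt.comp_hasDerivAt t (hF t ht))
        simpa [hre t, Function.comp_def] using this
      · exact (hAi.add hBi)
    rw [intervalIntegral.integral_add hAi hBi] at hftc
    simpa [hFdef, hA, hB] using hftc.symm
  · have hftc : ∫ t in c..d, (-A' t + B' t) = (F d).im - (F c).im := by
      apply intervalIntegral.integral_eq_sub_of_hasDerivAt
      · intro t ht
        rw [huI] at ht
        have := (Complex.imCLM.hasFDerivAt.comp_hasDerivAt t (hF t ht))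
        simpa [him t, Function.comp_def] using this
      · exact (hA'i.neg.add hB'i)
    have hnegi : IntervalIntegrable (fun t => -A' t) MeasureTheory.volume c d := hA'i.neg
    rw [intervalIntegral.integral_add hnegi hB'i, intervalIntegral.integral_neg] at hftc
    simpa [hFdef, hA', hB'] using hftc.symm
end

section
/- Write λ = α + iβ with α, β ∈ ℝ. For all real x and y: (1) the partial derivative in x of Im(u'(x+iy)·conj(u(x+iy))) equals (x³ − 3xy² − β)·|u(x+iy)|²; and (2) the partial derivative in x of Re(u'(x+iy)·conj(u(x+iy))) equals |u'(x+iy)|² + (y³ − 3x²y − α)·|u(x+iy)|². -/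
open Complex Real ComplexConjugate

/-- Let `u` be entire with `u''(z) = (iz³ - lam)·u(z)` and write
`lam = α + iβ`.  Then for all real `x, y`:
`∂/∂x Im(u'(x+iy)·conj u(x+iy)) = (x³ - 3xy² - β)·|u(x+iy)|²` and
`∂/∂x Re(u'(x+iy)·conj u(x+iy)) = |u'(x+iy)|² + (y³ - 3x²y - α)·|u(x+iy)|²`. -/
theorem partial_x_of_wronskian_like_quantities
    (lam : ℂ) (u : ℂ → ℂ)
    (hu_entire : Differentiable ℂ u)
    (hode : ∀ w : ℂ, iteratedDeriv 2 u w = (Complex.I * w ^ 3 - lam) * u w)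
    (x y : ℝ) :
    HasDerivAt
      (fun s : ℝ =>
        (deriv u (s + y * Complex.I) * conj (u (s + y * Complex.I))).im)
      ((x ^ 3 - 3 * x * y ^ 2 - lam.im)
        * ‖u (x + y * Complex.I)‖ ^ 2) x ∧
    HasDerivAt
      (fun s : ℝ =>
        (deriv u (s + y * Complex.I) * conj (u (s + y * Complex.I))).re)
      (‖deriv u (x + y * Complex.I)‖ ^ 2
        + (y ^ 3 - 3 * x ^ 2 * y - lam.re)
          * ‖u (x + y * Complex.I)‖ ^ 2) x := by
  set z : ℂ := (x : ℂ) + y * Complex.I with hz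
  -- derivative of the path s ↦ s + y i
  have hg : HasDerivAt (fun s : ℝ => (s : ℂ) + y * Complex.I) 1 x := by
    simpa using (Complex.ofRealCLM.hasDerivAt (x := x)).add_const ((y : ℂ) * Complex.I)
  -- deriv u is differentiable
  have hAN : AnalyticOnNhd ℂ u Set.univ :=
    analyticOnNhd_univ_iff_differentiable.mpr hu_entire
  have hu'diff : DifferentiableAt ℂ (deriv u) z :=
    (hAN.deriv z (Set.mem_univ z)).differentiableAt
  have h2 : HasDerivAt (deriv u) (iteratedDeriv 2 u z) z := by
    have : iteratedDeriv 2 u z = deriv (deriv u) z := by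
      rw [iteratedDeriv_succ, iteratedDeriv_one]
    rw [this]
    exact hu'diff.hasDerivAt
  have hA : HasDerivAt (fun s : ℝ => deriv u ((s : ℂ) + y * Complex.I))
      (iteratedDeriv 2 u z) x := by
    have h := h2.comp x hg
    rw [mul_one] at h
    exact h
  have hu0 : HasDerivAt u (deriv u z) z := (hu_entire z).hasDerivAt
  have hB : HasDerivAt (fun s : ℝ => u ((s : ℂ) + y * Complex.I)) (deriv u z) x := by
    have h := hu0.comp x hg
    rw [mul_one] at h
    exact h
  have hC : HasDerivAt (fun s : ℝ => conj (u ((s : ℂ) + y * Complex.I)))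
      (conj (deriv u z)) x := hB.star
  have hF : HasDerivAt
      (fun s : ℝ => deriv u ((s : ℂ) + y * Complex.I) * conj (u ((s : ℂ) + y * Complex.I)))
      (iteratedDeriv 2 u z * conj (u z) + deriv u z * conj (deriv u z)) x := hA.mul hC
  rw [hode z] at hF
  set c : ℂ := (Complex.I * z ^ 3 - lam) * u z * conj (u z) + deriv u z * conj (deriv u z)
    with hc
  have him : HasDerivAt
      (fun s : ℝ =>
        (deriv u ((s : ℂ) + y * Complex.I) * conj (u ((s : ℂ) + y * Complex.I))).im) c.im x := by
    have h := (Complex.imCLM.hasFDerivAt.comp x hF.hasFDerivAt).hasDerivAt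
    simp only [Function.comp_def, Complex.imCLM_apply, ContinuousLinearMap.coe_comp',
      ContinuousLinearMap.smulRight_apply, ContinuousLinearMap.one_apply, one_smul,
      ContinuousLinearMap.toSpanSingleton_apply] at h
    exact h
  have hre : HasDerivAt
      (fun s : ℝ =>
        (deriv u ((s : ℂ) + y * Complex.I) * conj (u ((s : ℂ) + y * Complex.I))).re) c.re x := by
    have h := (Complex.reCLM.hasFDerivAt.comp x hF.hasFDerivAt).hasDerivAt
    simp only [Function.comp_def, Complex.reCLM_apply, ContinuousLinearMap.coe_comp',
      ContinuousLinearMap.smulRight_apply, ContinuousLinearMap.one_apply, one_smul,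
      ContinuousLinearMap.toSpanSingleton_apply] at h
    exact h
  have habs : ∀ w : ℂ, w * conj w = ((‖w‖ : ℝ) ^ 2 : ℝ) := by
    intro w
    rw [Complex.mul_conj, Complex.sq_norm]
  have h1 : c = (Complex.I * z ^ 3 - lam) * ((‖u z‖ ^ 2 : ℝ) : ℂ)
      + ((‖deriv u z‖ ^ 2 : ℝ) : ℂ) := by
    rw [hc, mul_assoc, habs, habs]
  have htre : (Complex.I * z ^ 3 - lam).re = y ^ 3 - 3 * x ^ 2 * y - lam.re := by
    simp [hz, pow_succ, Complex.mul_re, Complex.mul_im]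
    ring
  have htim : (Complex.I * z ^ 3 - lam).im = x ^ 3 - 3 * x * y ^ 2 - lam.im := by
    simp [hz, pow_succ, Complex.mul_re, Complex.mul_im]
    ring
  have hc_im : c.im = (x ^ 3 - 3 * x * y ^ 2 - lam.im) * ‖u z‖ ^ 2 := by
    rw [h1]
    simp only [Complex.add_im, Complex.mul_im, Complex.ofReal_re, Complex.ofReal_im, htim]
    ring
  have hc_re : c.re = ‖deriv u z‖ ^ 2
      + (y ^ 3 - 3 * x ^ 2 * y - lam.re) * ‖u z‖ ^ 2 := by
    rw [h1]
    simp only [Complex.add_re, Complex.mul_re, Complex.ofReal_re, Complex.ofReal_im, htre]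
    ring
  rw [hc_im] at him
  rw [hc_re] at hre
  exact ⟨him, hre⟩
end

section
/- Assume β = Im λ > 0. Then Im(u'(z)·conj(u(z))) < 0 for every z in the set B₁ ∪ {z ∈ B₄ : Re z ≤ −(β/2)^{1/3}} ∪ {z ∉ A₁ : Im z ≥ −(β/2)^{1/3}}. -/
open Complex Real ComplexConjugate

open Filter Set Topology

namespace PTShinAux

lemma Pim (lam : ℂ) (t y : ℝ) :
    (Complex.I * ((t:ℂ) + y*Complex.I)^3 - lam).im = t^3 - 3*t*y^2 - lam.im := by
  simp [pow_succ, Complex.mul_im, Complex.mul_re]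
  ring

lemma Pre (lam : ℂ) (t y : ℝ) :
    (Complex.I * ((t:ℂ) + y*Complex.I)^3 - lam).re = y^3 - 3*t^2*y - lam.re := by
  simp [pow_succ, Complex.mul_im, Complex.mul_re]
  ring

lemma P1 {β : ℝ} (hβ : 0 < β) (y t : ℝ) (ht : t ≤ -1 - 2*|y|) :
    t^3 - 3*t*y^2 - β < 0 := by
  have hm : 0 ≤ |y| := abs_nonneg y
  have ht1 : t ≤ -1 := by linarith
  have hsq : (1 + 2*|y|)*(1 + 2*|y|) ≤ t*t := by
    have h1 : 0 ≤ 1 + 2*|y| := by linarith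
    have h2 : 1 + 2*|y| ≤ -t := by linarith
    nlinarith
  have hy2 : y^2 = |y|^2 := (_root_.sq_abs y).symm
  have h2 : 1 ≤ t^2 - 3*y^2 := by nlinarith
  have h3 : t*(t^2 - 3*y^2) ≤ t := by nlinarith
  nlinarith

lemma P2 {β c : ℝ} (hβ : 0 < β) (hc : 2*c^3 = β) {x y t : ℝ} (hyc : |y| ≤ c)
    (hQx : x^3 - 3*x*y^2 - β ≤ 0) (ht : t ≤ x) : t^3 - 3*t*y^2 - β ≤ 0 := by
  have hm : 0 ≤ |y| := abs_nonneg y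
  have hy2 : y^2 = |y|^2 := (_root_.sq_abs y).symm
  by_cases hcase : t ≤ 2*|y|
  · have key : (t + |y|)^2 * (t - 2*|y|) ≤ 0 :=
      mul_nonpos_of_nonneg_of_nonpos (sq_nonneg _) (by linarith)
    have h2 : |y|^3 ≤ c^3 := pow_le_pow_left₀ hm hyc 3
    nlinarith
  · push_neg at hcase
    have h0t : 0 < t := by linarith
    have a1 : t*t ≤ x*t := mul_le_mul_of_nonneg_right ht h0t.le
    have a2 : t*t ≤ x*x := by nlinarith
    have ht2 : 4*y^2 < t^2 := by nlinarith
    have f2 : 0 ≤ x^2 + x*t + t^2 - 3*y^2 := by nlinarith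
    have h1 : 0 ≤ (x - t) * (x^2 + x*t + t^2 - 3*y^2) :=
      mul_nonneg (by linarith) f2
    nlinarith

lemma P3 {β c : ℝ} (hβ : 0 < β) (hc : 2*c^3 = β) {x y : ℝ} (hyc : |y| ≤ c) (hx : x ≤ 0) :
    x^3 - 3*x*y^2 - β ≤ 0 := by
  have hm : 0 ≤ |y| := abs_nonneg y
  have hy2 : y^2 = |y|^2 := (_root_.sq_abs y).symm
  have key : (x + |y|)^2 * (x - 2*|y|) ≤ 0 :=
    mul_nonpos_of_nonneg_of_nonpos (sq_nonneg _) (by linarith)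
  have h2 : |y|^3 ≤ c^3 := pow_le_pow_left₀ hm hyc 3
  nlinarith

lemma P4 {β : ℝ} (hβ : 0 < β) {x y t : ℝ} (hx : 0 < x)
    (hQx : 0 < x^3 - 3*x*y^2 - β) (ht : x ≤ t) :
    x^3 - 3*x*y^2 - β ≤ t^3 - 3*t*y^2 - β := by
  have hx2 : 3*y^2 < x^2 := by nlinarith
  have a1 : x*x ≤ t*x := mul_le_mul_of_nonneg_right ht hx.le
  have a2 : x*x ≤ t*t := by nlinarith
  have f2 : 0 ≤ t^2 + t*x + x^2 - 3*y^2 := by nlinarith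
  have h1 : 0 ≤ (t - x) * (t^2 + t*x + x^2 - 3*y^2) := mul_nonneg (by linarith) f2
  nlinarith

lemma P5 {β c : ℝ} (hβ : 0 < β) (hc : 2*c^3 = β) (hc0 : 0 < c) {x y t : ℝ}
    (hx : x ≤ -c) (hQx : x^3 - 3*x*y^2 - β < 0) (ht : t ≤ x) :
    t^3 - 3*t*y^2 - β ≤ 0 := by
  have hx0 : x < 0 := by linarith
  by_cases h : 3*y^2 ≤ x^2
  · have ht2 : x*x ≤ t*t := by nlinarith
    have h1 : t*(t^2 - 3*y^2) ≤ 0 :=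
      mul_nonpos_of_nonpos_of_nonneg (by linarith) (by nlinarith)
    nlinarith
  · push_neg at h
    have hcx : c^2 ≤ x^2 := by nlinarith
    have hy2x : y^2 < x^2 := by nlinarith
    have a1 : x*x ≤ x*t := by nlinarith
    have a2 : x*x ≤ t*t := by nlinarith
    have f2 : 0 ≤ x^2 + x*t + t^2 - 3*y^2 := by nlinarith
    have h1 : 0 ≤ (x - t) * (x^2 + x*t + t^2 - 3*y^2) := mul_nonneg (by linarith) f2
    nlinarith

lemma P6 {α : ℝ} (hα : 0 < α) {x y s : ℝ} (hy : y^3 - 3*x^2*y ≤ α)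
    (hs0 : 0 ≤ s) (hsy : s ≤ y) : s^3 - 3*x^2*s ≤ α := by
  by_cases h : s^2 ≤ 3*x^2
  · have : s*(s^2 - 3*x^2) ≤ 0 := mul_nonpos_of_nonneg_of_nonpos hs0 (by linarith)
    nlinarith
  · push_neg at h
    have a1 : s*s ≤ y*s := mul_le_mul_of_nonneg_right hsy hs0
    have a2 : s*s ≤ y*y := by nlinarith
    have f2 : 0 ≤ y^2 + y*s + s^2 - 3*x^2 := by nlinarith
    have h1 : 0 ≤ (y - s) * (y^2 + y*s + s^2 - 3*x^2) := mul_nonneg (by linarith) f2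
    nlinarith

variable {lam : ℂ} {u : ℂ → ℂ}

lemma hDu (hu : Differentiable ℂ u) : Differentiable ℂ (deriv u) := fun z =>
  ((hu.differentiableOn.analyticOnNhd isOpen_univ).deriv z (mem_univ z)).differentiableAt

lemma hasDerivAt_deriv_u (hu : Differentiable ℂ u)
    (hode : ∀ w : ℂ, iteratedDeriv 2 u w = (Complex.I * w ^ 3 - lam) * u w) (w : ℂ) :
    HasDerivAt (deriv u) ((Complex.I * w ^ 3 - lam) * u w) w := by
  have h := (hDu hu w).hasDerivAt
  have h2 : deriv (deriv u) w = (Complex.I * w ^ 3 - lam) * u w := by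
    rw [← hode w]; simp [iteratedDeriv_succ, iteratedDeriv_one]
  rwa [h2] at h

lemma comp_line {F : ℂ → ℂ} {F' : ℂ} {y t : ℝ} (hF : HasDerivAt F F' (↑t + ↑y*Complex.I)) :
    HasDerivAt (fun s : ℝ => F (↑s + ↑y*Complex.I)) F' t := by
  have : HasDerivAt (fun z : ℂ => F (z + ↑y*Complex.I)) (F' * 1) t :=
    HasDerivAt.comp _ (by simpa using hF) ((hasDerivAt_id _).add_const _)
  simpa using this.comp_ofReal

lemma comp_vert {F : ℂ → ℂ} {F' : ℂ} {x s : ℝ} (hF : HasDerivAt F F' (↑x + ↑s*Complex.I)) :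
    HasDerivAt (fun r : ℝ => F (↑x + ↑r*Complex.I)) (F' * Complex.I) s := by
  have : HasDerivAt (fun z : ℂ => F (↑x + z*Complex.I)) (F' * Complex.I) s := by
    have h1 : HasDerivAt (fun z : ℂ => (↑x + z*Complex.I)) Complex.I (s:ℂ) := by
      simpa using ((hasDerivAt_id (s:ℂ)).mul_const Complex.I).const_add (x:ℂ)
    exact HasDerivAt.comp _ (by simpa using hF) h1
  exact this.comp_ofReal

lemma hdim {F : ℝ → ℂ} {F' : ℂ} {t : ℝ} (h : HasDerivAt F F' t) :
    HasDerivAt (fun s => (F s).im) F'.im t :=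
  (Complex.imCLM.hasFDerivAt.comp_hasDerivAt t h)

lemma hdre {F : ℝ → ℂ} {F' : ℂ} {t : ℝ} (h : HasDerivAt F F' t) :
    HasDerivAt (fun s => (F s).re) F'.re t :=
  (Complex.reCLM.hasFDerivAt.comp_hasDerivAt t h)

/-- derivative of the full product along a horizontal line -/
lemma prod_deriv_horiz (hu : Differentiable ℂ u)
    (hode : ∀ w : ℂ, iteratedDeriv 2 u w = (Complex.I * w ^ 3 - lam) * u w) (y t : ℝ) :
    HasDerivAt (fun s : ℝ => deriv u (↑s + ↑y*Complex.I) * (starRingEnd ℂ) (u (↑s + ↑y*Complex.I)))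
      ((Complex.I * (↑t + ↑y*Complex.I) ^ 3 - lam) * u (↑t + ↑y*Complex.I) *
          (starRingEnd ℂ) (u (↑t + ↑y*Complex.I))
        + deriv u (↑t + ↑y*Complex.I) * (starRingEnd ℂ) (deriv u (↑t + ↑y*Complex.I))) t := by
  have hf : HasDerivAt (fun s : ℝ => u (↑s + ↑y*Complex.I))
      (deriv u (↑t + ↑y*Complex.I)) t := comp_line ((hu _).hasDerivAt)
  have hg : HasDerivAt (fun s : ℝ => deriv u (↑s + ↑y*Complex.I))
      ((Complex.I * (↑t + ↑y*Complex.I) ^ 3 - lam) * u (↑t + ↑y*Complex.I)) t :=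
    comp_line (hasDerivAt_deriv_u hu hode _)
  simpa [mul_comm, Pi.mul_def] using hg.mul hf.star

lemma W_deriv_horiz (hu : Differentiable ℂ u)
    (hode : ∀ w : ℂ, iteratedDeriv 2 u w = (Complex.I * w ^ 3 - lam) * u w) (y t : ℝ) :
    HasDerivAt (fun s : ℝ =>
        (deriv u (↑s + ↑y*Complex.I) * (starRingEnd ℂ) (u (↑s + ↑y*Complex.I))).im)
      ((t^3 - 3*t*y^2 - lam.im) * Complex.normSq (u (↑t + ↑y*Complex.I))) t := by
  have h := hdim (prod_deriv_horiz hu hode y t)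
  have e : ∀ z : ℂ, ((Complex.I * z ^ 3 - lam) * u z * (starRingEnd ℂ) (u z)
        + deriv u z * (starRingEnd ℂ) (deriv u z)).im
      = (Complex.I * z ^ 3 - lam).im * Complex.normSq (u z) := by
    intro z
    rw [mul_assoc, Complex.mul_conj, Complex.mul_conj]
    simp
  rw [e, Pim] at h
  exact h

lemma prod_deriv_vert (hu : Differentiable ℂ u)
    (hode : ∀ w : ℂ, iteratedDeriv 2 u w = (Complex.I * w ^ 3 - lam) * u w) (x s : ℝ) :
    HasDerivAt (fun r : ℝ => deriv u (↑x + ↑r*Complex.I) * (starRingEnd ℂ) (u (↑x + ↑r*Complex.I)))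
      ((Complex.I * (↑x + ↑s*Complex.I) ^ 3 - lam) * u (↑x + ↑s*Complex.I) * Complex.I *
          (starRingEnd ℂ) (u (↑x + ↑s*Complex.I))
        + deriv u (↑x + ↑s*Complex.I) *
          (starRingEnd ℂ) (deriv u (↑x + ↑s*Complex.I) * Complex.I)) s := by
  have hf : HasDerivAt (fun r : ℝ => u (↑x + ↑r*Complex.I))
      (deriv u (↑x + ↑s*Complex.I) * Complex.I) s := comp_vert ((hu _).hasDerivAt)
  have hg : HasDerivAt (fun r : ℝ => deriv u (↑x + ↑r*Complex.I))
      ((Complex.I * (↑x + ↑s*Complex.I) ^ 3 - lam) * u (↑x + ↑s*Complex.I) * Complex.I) s :=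
    comp_vert (hasDerivAt_deriv_u hu hode _)
  simpa [mul_comm, Pi.mul_def] using hg.mul hf.star

lemma W_deriv_vert (hu : Differentiable ℂ u)
    (hode : ∀ w : ℂ, iteratedDeriv 2 u w = (Complex.I * w ^ 3 - lam) * u w) (x s : ℝ) :
    HasDerivAt (fun r : ℝ =>
        (deriv u (↑x + ↑r*Complex.I) * (starRingEnd ℂ) (u (↑x + ↑r*Complex.I))).im)
      ((s^3 - 3*x^2*s - lam.re) * Complex.normSq (u (↑x + ↑s*Complex.I))
        - Complex.normSq (deriv u (↑x + ↑s*Complex.I))) s := by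
  have h := hdim (prod_deriv_vert hu hode x s)
  have e : ∀ z : ℂ, ((Complex.I * z ^ 3 - lam) * u z * Complex.I * (starRingEnd ℂ) (u z)
        + deriv u z * (starRingEnd ℂ) (deriv u z * Complex.I)).im
      = (Complex.I * z ^ 3 - lam).re * Complex.normSq (u z) - Complex.normSq (deriv u z) := by
    intro z
    have : (Complex.I * z ^ 3 - lam) * u z * Complex.I * (starRingEnd ℂ) (u z)
        = (Complex.I * z ^ 3 - lam) * Complex.I * (u z * (starRingEnd ℂ) (u z)) := by ring
    rw [this, Complex.mul_conj, map_mul, ← mul_assoc, Complex.mul_conj]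
    simp [Complex.conj_I]
    ring
  rw [e, Pre] at h
  exact h

lemma V_deriv_horiz (hu : Differentiable ℂ u)
    (hode : ∀ w : ℂ, iteratedDeriv 2 u w = (Complex.I * w ^ 3 - lam) * u w) (y t : ℝ) :
    HasDerivAt (fun s : ℝ =>
        (deriv u (↑s + ↑y*Complex.I) * (starRingEnd ℂ) (u (↑s + ↑y*Complex.I))).re)
      ((y^3 - 3*t^2*y - lam.re) * Complex.normSq (u (↑t + ↑y*Complex.I))
        + Complex.normSq (deriv u (↑t + ↑y*Complex.I))) t := by
  have h := hdre (prod_deriv_horiz hu hode y t)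
  have e : ∀ z : ℂ, ((Complex.I * z ^ 3 - lam) * u z * (starRingEnd ℂ) (u z)
        + deriv u z * (starRingEnd ℂ) (deriv u z)).re
      = (Complex.I * z ^ 3 - lam).re * Complex.normSq (u z) + Complex.normSq (deriv u z) := by
    intro z
    rw [mul_assoc, Complex.mul_conj, Complex.mul_conj]
    simp
  rw [e, Pre] at h
  exact h

lemma line_tendsto (u : ℂ → ℂ)
    (hdecay : ∀ M : ℝ, 0 < M → ∃ C₁ > (0 : ℝ), ∃ C₂ > (0 : ℝ), ∀ x y : ℝ, |y| ≤ M →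
      ‖u (x + y * Complex.I)‖ + ‖deriv u (x + y * Complex.I)‖
        ≤ C₁ * Real.exp (-(|x| ^ C₂)))
    (y : ℝ) (φ : ℂ → ℝ) (hφ : ∀ z, |φ z| ≤ ‖z‖) (l : Filter ℝ)
    (hl : Tendsto (fun t : ℝ => |t|) l atTop) :
    Tendsto (fun t : ℝ =>
      φ (deriv u (↑t + ↑y*Complex.I) * (starRingEnd ℂ) (u (↑t + ↑y*Complex.I)))) l (𝓝 0) := by
  obtain ⟨C₁, hC₁, C₂, hC₂, hb⟩ := hdecay (|y| + 1) (by positivity)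
  refine squeeze_zero_norm (a := fun t : ℝ => (C₁ * Real.exp (-(|t| ^ C₂)))^2) ?_ ?_
  · intro t
    have h1 := hb t y (by linarith [abs_nonneg y])
    have ha : ‖u (↑t + ↑y*Complex.I)‖ ≥ 0 := norm_nonneg _
    have hg : ‖deriv u (↑t + ↑y*Complex.I)‖ ≥ 0 := norm_nonneg _
    have h2 : ‖φ (deriv u (↑t + ↑y*Complex.I) * (starRingEnd ℂ) (u (↑t + ↑y*Complex.I)))‖
        ≤ ‖deriv u (↑t + ↑y*Complex.I)‖ * ‖u (↑t + ↑y*Complex.I)‖ := by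
      rw [Real.norm_eq_abs]
      refine (hφ _).trans ?_
      rw [norm_mul, Complex.norm_conj]
    refine h2.trans ?_
    set A := ‖u (↑t + ↑y*Complex.I)‖
    set B := ‖deriv u (↑t + ↑y*Complex.I)‖
    have hC : (0:ℝ) ≤ C₁ * Real.exp (-(|t| ^ C₂)) := le_trans (by positivity) h1
    have k1 : B * A ≤ (A + B) * (A + B) := by nlinarith
    have k2 : (A + B) * (A + B) ≤ (C₁ * Real.exp (-(|t| ^ C₂))) * (C₁ * Real.exp (-(|t| ^ C₂))) :=
      mul_le_mul h1 h1 (by positivity) hC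
    calc B * A ≤ _ := k1
      _ ≤ _ := k2
      _ = (C₁ * Real.exp (-(|t| ^ C₂)))^2 := (sq _).symm
  · have houter : Tendsto (fun r : ℝ => (C₁ * Real.exp (-r))^2) atTop (𝓝 0) := by
      have h0 : Tendsto (fun r : ℝ => Real.exp (-r)) atTop (𝓝 0) :=
        Real.tendsto_exp_atBot.comp tendsto_neg_atTop_atBot
      have := ((h0.const_mul C₁).pow 2)
      simpa using this
    have hinner : Tendsto (fun t : ℝ => |t| ^ C₂) l atTop :=
      (tendsto_rpow_atTop hC₂).comp hl
    exact houter.comp hinner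

lemma neg_of_left (W D : ℝ → ℝ) (hW : ∀ t, HasDerivAt W (D t) t) (hD : Continuous D)
    (hlim : Tendsto W atBot (𝓝 0)) {x₀ a b : ℝ} (hab : a < b) (hbx : b ≤ x₀)
    (hD0 : ∀ t ≤ x₀, D t ≤ 0) (hneg : ∀ t ∈ Set.Ioo a b, D t < 0) : W x₀ < 0 := by
  have ftc : ∀ p q : ℝ, (∫ t in p..q, D t) = W q - W p := fun p q =>
    intervalIntegral.integral_eq_sub_of_hasDerivAt (fun t _ => hW t) (hD.intervalIntegrable p q)
  have mono : ∀ p q : ℝ, p ≤ q → q ≤ x₀ → W q ≤ W p := by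
    intro p q hpq hq
    have h1 : 0 ≤ ∫ t in p..q, -D t :=
      intervalIntegral.integral_nonneg hpq (fun t ht => by
        have := hD0 t (le_trans ht.2 hq); linarith)
    rw [intervalIntegral.integral_neg, ftc] at h1
    linarith
  have hWa : W a ≤ 0 := by
    refine ge_of_tendsto hlim ?_
    filter_upwards [eventually_le_atBot a] with p hp
    exact mono p a hp (le_trans hab.le hbx)
  have hstrict : 0 < ∫ t in a..b, -D t := by
    refine intervalIntegral.intervalIntegral_pos_of_pos_on
      ((hD.neg).intervalIntegrable a b) (fun t ht => by have := hneg t ht; linarith) hab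
  rw [intervalIntegral.integral_neg, ftc] at hstrict
  have hWb : W b < W a := by linarith
  have := mono b x₀ hbx le_rfl
  linarith

lemma neg_of_right (W D : ℝ → ℝ) (hW : ∀ t, HasDerivAt W (D t) t) (hD : Continuous D)
    (hlim : Tendsto W atTop (𝓝 0)) {x₀ a b : ℝ} (hab : a < b) (hxa : x₀ ≤ a)
    (hD0 : ∀ t, x₀ ≤ t → 0 ≤ D t) (hpos : ∀ t ∈ Set.Ioo a b, 0 < D t) : W x₀ < 0 := by
  have ftc : ∀ p q : ℝ, (∫ t in p..q, D t) = W q - W p := fun p q =>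
    intervalIntegral.integral_eq_sub_of_hasDerivAt (fun t _ => hW t) (hD.intervalIntegrable p q)
  have mono : ∀ p q : ℝ, p ≤ q → x₀ ≤ p → W p ≤ W q := by
    intro p q hpq hp
    have h1 : 0 ≤ ∫ t in p..q, D t :=
      intervalIntegral.integral_nonneg hpq (fun t ht => hD0 t (le_trans hp ht.1))
    rw [ftc] at h1; linarith
  have hWb : W b ≤ 0 := by
    refine ge_of_tendsto hlim ?_
    filter_upwards [eventually_ge_atTop b] with q hq
    exact mono b q hq (le_trans hxa hab.le)
  have hstrict : 0 < ∫ t in a..b, D t :=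
    intervalIntegral.intervalIntegral_pos_of_pos_on
      (hD.intervalIntegrable a b) (fun t ht => hpos t ht) hab
  rw [ftc] at hstrict
  have := mono x₀ a hxa le_rfl
  linarith

lemma exists_ne_on_line (F : ℂ → ℂ) (hF : Differentiable ℂ F) (hne : ∃ w, F w ≠ 0)
    (y a b : ℝ) (hab : a < b) : ∃ t, t ∈ Set.Ioo a b ∧ F (↑t + ↑y*Complex.I) ≠ 0 := by
  by_contra hcon
  push_neg at hcon
  set m : ℝ := (a + b)/2 with hm
  set δ : ℝ := (b - a)/4 with hδ
  have hδ0 : 0 < δ := by simp [hδ]; linarith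
  set z₀ : ℂ := ↑m + ↑y*Complex.I with hz₀
  set seq : ℕ → ℂ := fun n => ↑(m + δ * (1/2)^n) + ↑y*Complex.I with hseq
  have hmem : ∀ n : ℕ, (m + δ * (1/2)^n) ∈ Set.Ioo a b := by
    intro n
    constructor
    · have : (0:ℝ) < δ * (1/2)^n := by positivity
      simp only [hm]; nlinarith
    · have h1 : δ * (1/2)^n ≤ δ * 1 := by
        apply mul_le_mul_of_nonneg_left _ hδ0.le
        exact pow_le_one₀ (by norm_num) (by norm_num)
      simp only [hm, hδ] at *; nlinarith
  have hzero : ∀ n : ℕ, F (seq n) = 0 := fun n => hcon _ (hmem n)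
  have htm : Tendsto (fun n : ℕ => m + δ * (1/2)^n) atTop (𝓝 m) := by
    have h0 : Tendsto (fun n : ℕ => ((1:ℝ)/2)^n) atTop (𝓝 0) :=
      tendsto_pow_atTop_nhds_zero_of_lt_one (by norm_num) (by norm_num)
    have := (h0.const_mul δ).const_add m
    simpa using this
  have htend : Tendsto seq atTop (𝓝[≠] z₀) := by
    apply tendsto_nhdsWithin_of_tendsto_nhds_of_eventually_within
    · have hc : Tendsto (fun n : ℕ => ((m + δ * (1/2)^n : ℝ) : ℂ)) atTop (𝓝 (↑m)) :=
        (Complex.continuous_ofReal.tendsto m).comp htm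
      simpa [hseq, hz₀] using hc.add (tendsto_const_nhds (x := (↑y*Complex.I : ℂ)))
    · refine Eventually.of_forall fun n => ?_
      intro hEq
      simp only [Set.mem_setOf_eq, hseq, hz₀] at hEq
      have h2 : ((m + δ * (1/2)^n : ℝ) : ℂ) = (m : ℂ) := add_right_cancel hEq
      have h3 : m + δ * (1/2)^n = m := by exact_mod_cast h2
      have : (0:ℝ) < δ * (1/2)^n := by positivity
      linarith
  have hfreq : ∃ᶠ w in 𝓝[≠] z₀, F w = 0 :=
    htend.frequently (Frequently.of_forall hzero)
  have hzero' : Set.EqOn F 0 Set.univ :=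
    (hF.differentiableOn.analyticOnNhd isOpen_univ).eqOn_zero_of_preconnected_of_frequently_eq_zero
      isPreconnected_univ (Set.mem_univ z₀) hfreq
  obtain ⟨w, hw⟩ := hne
  exact hw (hzero' (Set.mem_univ w))

lemma cont_line (y : ℝ) : Continuous (fun t : ℝ => (↑t + ↑y*Complex.I : ℂ)) :=
  Complex.continuous_ofReal.add continuous_const

lemma cont_vline (x : ℝ) : Continuous (fun s : ℝ => (↑x + ↑s*Complex.I : ℂ)) :=
  continuous_const.add (Complex.continuous_ofReal.mul continuous_const)

lemma contD_horiz (hu : Differentiable ℂ u) (y : ℝ) :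
    Continuous (fun t : ℝ => (t^3 - 3*t*y^2 - lam.im) * Complex.normSq (u (↑t + ↑y*Complex.I))) := by
  have h1 : Continuous (fun t : ℝ => t^3 - 3*t*y^2 - lam.im) := by continuity
  exact h1.mul (Complex.continuous_normSq.comp (hu.continuous.comp (cont_line y)))

lemma contD_vert (hu : Differentiable ℂ u) (x : ℝ) :
    Continuous (fun s : ℝ => (s^3 - 3*x^2*s - lam.re) * Complex.normSq (u (↑x + ↑s*Complex.I))
      - Complex.normSq (deriv u (↑x + ↑s*Complex.I))) := by
  have h1 : Continuous (fun s : ℝ => s^3 - 3*x^2*s - lam.re) := by continuity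
  exact (h1.mul (Complex.continuous_normSq.comp (hu.continuous.comp (cont_vline x)))).sub
    (Complex.continuous_normSq.comp (((hDu hu).continuous).comp (cont_vline x)))

/-- find a subinterval of `Ioo A B` on which `u` is nonvanishing along the line -/
lemma sub_interval (hu : Differentiable ℂ u) (hune : ∃ w, u w ≠ 0) {A B : ℝ} (hAB : A < B)
    (y : ℝ) : ∃ a b, A ≤ a ∧ a < b ∧ b ≤ B ∧
      ∀ t ∈ Set.Ioo a b, u (↑t + ↑y*Complex.I) ≠ 0 := by
  obtain ⟨t₀, ht₀, hne⟩ := exists_ne_on_line u hu hune y A B hAB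
  have hev : {t : ℝ | u (↑t + ↑y*Complex.I) ≠ 0 ∧ t ∈ Set.Ioo A B} ∈ 𝓝 t₀ := by
    refine Filter.Eventually.and ?_ (isOpen_Ioo.eventually_mem ht₀)
    exact ((hu.continuous.comp (cont_line y)).continuousAt).eventually_ne hne
  obtain ⟨a', b', hmem, hsub⟩ := mem_nhds_iff_exists_Ioo_subset.mp hev
  refine ⟨max a' A, min b' B, le_max_right _ _, ?_, min_le_right _ _, ?_⟩
  · exact lt_trans (max_lt hmem.1 ht₀.1) (lt_min hmem.2 ht₀.2)
  · intro t ht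
    have : t ∈ Set.Ioo a' b' :=
      ⟨lt_of_le_of_lt (le_max_left _ _) ht.1, lt_of_lt_of_le ht.2 (min_le_left _ _)⟩
    exact (hsub this).1

lemma Wneg_left (hbeta : 0 < lam.im) (hu : Differentiable ℂ u)
    (hode : ∀ w : ℂ, iteratedDeriv 2 u w = (Complex.I * w ^ 3 - lam) * u w)
    (hdecay : ∀ M : ℝ, 0 < M → ∃ C₁ > (0 : ℝ), ∃ C₂ > (0 : ℝ), ∀ x y : ℝ, |y| ≤ M →
      ‖u (x + y * Complex.I)‖ + ‖deriv u (x + y * Complex.I)‖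
        ≤ C₁ * Real.exp (-(|x| ^ C₂)))
    (hune : ∃ w, u w ≠ 0) (x₀ y : ℝ)
    (hQ : ∀ t ≤ x₀, t^3 - 3*t*y^2 - lam.im ≤ 0) :
    (deriv u (↑x₀ + ↑y*Complex.I) * (starRingEnd ℂ) (u (↑x₀ + ↑y*Complex.I))).im < 0 := by
  set T := min (x₀ - 1) (-1 - 2*|y|) with hT
  obtain ⟨a, b, haT, hab, hbT, hne⟩ := sub_interval hu hune (show T - 1 < T by linarith) y
  refine neg_of_left _ (fun t => (t^3 - 3*t*y^2 - lam.im) * Complex.normSq (u (↑t + ↑y*Complex.I)))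
    (fun t => W_deriv_horiz hu hode y t) (contD_horiz hu y)
    (line_tendsto u hdecay y Complex.im (fun z => Complex.abs_im_le_norm z) atBot
      tendsto_abs_atBot_atTop)
    hab (le_trans hbT (le_trans (min_le_left _ _) (by linarith))) ?_ ?_
  · intro t ht
    exact mul_nonpos_of_nonpos_of_nonneg (hQ t ht) (Complex.normSq_nonneg _)
  · intro t ht
    have h1 : t ≤ -1 - 2*|y| := le_trans ht.2.le (le_trans hbT (min_le_right _ _))
    exact mul_neg_of_neg_of_pos (P1 hbeta y t h1) (Complex.normSq_pos.mpr (hne t ht))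

lemma Wneg_right (hbeta : 0 < lam.im) (hu : Differentiable ℂ u)
    (hode : ∀ w : ℂ, iteratedDeriv 2 u w = (Complex.I * w ^ 3 - lam) * u w)
    (hdecay : ∀ M : ℝ, 0 < M → ∃ C₁ > (0 : ℝ), ∃ C₂ > (0 : ℝ), ∀ x y : ℝ, |y| ≤ M →
      ‖u (x + y * Complex.I)‖ + ‖deriv u (x + y * Complex.I)‖
        ≤ C₁ * Real.exp (-(|x| ^ C₂)))
    (hune : ∃ w, u w ≠ 0) (x₀ y : ℝ)
    (hx₀ : 0 < x₀) (hQx : 0 < x₀^3 - 3*x₀*y^2 - lam.im) :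
    (deriv u (↑x₀ + ↑y*Complex.I) * (starRingEnd ℂ) (u (↑x₀ + ↑y*Complex.I))).im < 0 := by
  obtain ⟨a, b, hax, hab, hbB, hne⟩ := sub_interval hu hune (show x₀ < x₀ + 1 by linarith) y
  refine neg_of_right _ (fun t => (t^3 - 3*t*y^2 - lam.im) * Complex.normSq (u (↑t + ↑y*Complex.I)))
    (fun t => W_deriv_horiz hu hode y t) (contD_horiz hu y)
    (line_tendsto u hdecay y Complex.im (fun z => Complex.abs_im_le_norm z) atTop
      tendsto_abs_atTop_atTop)
    hab hax ?_ ?_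
  · intro t ht
    have := P4 hbeta hx₀ hQx ht
    exact mul_nonneg (by linarith) (Complex.normSq_nonneg _)
  · intro t ht
    have h1 := P4 hbeta hx₀ hQx (le_of_lt (lt_of_le_of_lt hax ht.1))
    exact mul_pos (by linarith) (Complex.normSq_pos.mpr (hne t ht))

lemma lam_ne_zero (hbeta : 0 < lam.im) : lam ≠ 0 := fun h => by simp [h] at hbeta

lemma alpha_pos (hbeta : 0 < lam.im) (hu : Differentiable ℂ u)
    (hu_ne : u ≠ 0)
    (hode : ∀ w : ℂ, iteratedDeriv 2 u w = (Complex.I * w ^ 3 - lam) * u w)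
    (hdecay : ∀ M : ℝ, 0 < M → ∃ C₁ > (0 : ℝ), ∃ C₂ > (0 : ℝ), ∀ x y : ℝ, |y| ≤ M →
      ‖u (x + y * Complex.I)‖ + ‖deriv u (x + y * Complex.I)‖
        ≤ C₁ * Real.exp (-(|x| ^ C₂))) :
    0 < lam.re := by
  by_contra hα
  push_neg at hα
  set V : ℝ → ℝ := fun t =>
    (deriv u (↑t + ↑(0:ℝ)*Complex.I) * (starRingEnd ℂ) (u (↑t + ↑(0:ℝ)*Complex.I))).re with hV
  set D : ℝ → ℝ := fun t =>
    ((0:ℝ)^3 - 3*t^2*0 - lam.re) * Complex.normSq (u (↑t + ↑(0:ℝ)*Complex.I))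
      + Complex.normSq (deriv u (↑t + ↑(0:ℝ)*Complex.I)) with hD
  have hVd : ∀ t, HasDerivAt V (D t) t := fun t => V_deriv_horiz hu hode 0 t
  have hDpos : ∀ t, 0 ≤ D t := by
    intro t
    have h1 := Complex.normSq_nonneg (u (↑t + ↑(0:ℝ)*Complex.I))
    have h2 := Complex.normSq_nonneg (deriv u (↑t + ↑(0:ℝ)*Complex.I))
    simp only [hD]
    nlinarith
  have hDcont : Continuous D := by
    have h1 : Continuous (fun t : ℝ => ((0:ℝ)^3 - 3*t^2*0 - lam.re)) := by continuity
    exact (h1.mul (Complex.continuous_normSq.comp (hu.continuous.comp (cont_line 0)))).add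
      (Complex.continuous_normSq.comp (((hDu hu).continuous).comp (cont_line 0)))
  have ftc : ∀ p q : ℝ, (∫ t in p..q, D t) = V q - V p := fun p q =>
    intervalIntegral.integral_eq_sub_of_hasDerivAt (fun t _ => hVd t)
      (hDcont.intervalIntegrable p q)
  have mono : ∀ p q : ℝ, p ≤ q → V p ≤ V q := by
    intro p q hpq
    have h1 : 0 ≤ ∫ t in p..q, D t :=
      intervalIntegral.integral_nonneg hpq (fun t _ => hDpos t)
    rw [ftc] at h1; linarith
  have hlimT : Tendsto V atTop (𝓝 0) :=
    line_tendsto u hdecay 0 Complex.re (fun z => Complex.abs_re_le_norm z) atTop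
      tendsto_abs_atTop_atTop
  have hlimB : Tendsto V atBot (𝓝 0) :=
    line_tendsto u hdecay 0 Complex.re (fun z => Complex.abs_re_le_norm z) atBot
      tendsto_abs_atBot_atTop
  have hV0 : ∀ t, V t = 0 := by
    intro t
    have h1 : V t ≤ 0 := by
      refine ge_of_tendsto hlimT ?_
      filter_upwards [eventually_ge_atTop t] with q hq
      exact mono t q hq
    have h2 : 0 ≤ V t := by
      refine le_of_tendsto hlimB ?_
      filter_upwards [eventually_le_atBot t] with p hp
      exact mono p t hp
    linarith
  have hDzero : ∀ t, D t = 0 := by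
    intro t
    have hconst : HasDerivAt (fun _ : ℝ => (0:ℝ)) (D t) t := by
      have h := hVd t
      have : V = fun _ : ℝ => (0:ℝ) := funext hV0
      rwa [this] at h
    exact hconst.unique (hasDerivAt_const t 0)
  have hderiv0 : ∀ t : ℝ, deriv u (↑t + ↑(0:ℝ)*Complex.I) = 0 := by
    intro t
    have h := hDzero t
    have h1 := Complex.normSq_nonneg (u (↑t + ↑(0:ℝ)*Complex.I))
    have h2 := Complex.normSq_nonneg (deriv u (↑t + ↑(0:ℝ)*Complex.I))
    have : Complex.normSq (deriv u (↑t + ↑(0:ℝ)*Complex.I)) = 0 := by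
      simp only [hD] at h; nlinarith
    exact Complex.normSq_eq_zero.mp this
  by_cases hdne : ∃ w, deriv u w ≠ 0
  · obtain ⟨t₀, _, hne⟩ := exists_ne_on_line (deriv u) (hDu hu) hdne 0 0 1 (by norm_num)
    exact hne (hderiv0 t₀)
  · push_neg at hdne
    have hconst : ∀ w : ℂ, u w = u 0 := fun w => is_const_of_deriv_eq_zero hu hdne w 0
    have h0 : iteratedDeriv 2 u 0 = deriv (deriv u) 0 := by
      simp [iteratedDeriv_succ, iteratedDeriv_one]
    have hd : deriv (deriv u) 0 = 0 := by
      have : deriv u = fun _ => (0:ℂ) := funext hdne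
      rw [this]; simp
    have := hode 0
    rw [h0, hd] at this
    have hu0 : u 0 = 0 := by
      have hlam := lam_ne_zero hbeta
      have : (Complex.I * 0 ^ 3 - lam) * u 0 = 0 := this.symm
      simpa [hlam] using this
    apply hu_ne
    funext w
    rw [hconst w, hu0]; rfl

end PTShinAux

open PTShinAux

/-- Let `u` be an eigenfunction of the cubic PT-symmetric oscillator
`-u'' - (iz)³u = lam·u` with eigenvalue `lam = α + iβ`, and assume `β = Im lam > 0`.
Then `Im(u'(z)·conj(u(z))) < 0` for every `z` in
`B₁ ∪ {z ∈ B₄ : Re z ≤ -(β/2)^{1/3}} ∪ {z ∉ A₁ : Im z ≥ -(β/2)^{1/3}}`, where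
`A₁ = {z : Re(iz³-lam) > 0, Im z > 0}`, `B₁ = {z : Im(iz³-lam) > 0, Re z > 0}` and
`B₄ = {z : Im(iz³-lam) < 0}`. -/
theorem im_wronskian_neg_region
    (lam : ℂ) (u : ℂ → ℂ)
    (hbeta : 0 < lam.im)
    (hu_entire : Differentiable ℂ u)
    (hu_ne : u ≠ 0)
    (hode : ∀ w : ℂ, iteratedDeriv 2 u w = (Complex.I * w ^ 3 - lam) * u w)
    (hdecay : ∀ M : ℝ, 0 < M → ∃ C₁ > (0 : ℝ), ∃ C₂ > (0 : ℝ), ∀ x y : ℝ, |y| ≤ M →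
      ‖u (x + y * Complex.I)‖ + ‖deriv u (x + y * Complex.I)‖
        ≤ C₁ * Real.exp (-(|x| ^ C₂))) :
    ∀ z : ℂ,
      (z ∈ {w : ℂ | 0 < (Complex.I * w ^ 3 - lam).im ∧ 0 < w.re} ∪
        {w : ℂ | ((Complex.I * w ^ 3 - lam).im < 0) ∧
          w.re ≤ -((lam.im / 2) ^ ((1 : ℝ) / 3))} ∪
        {w : ℂ | w ∉ {v : ℂ | 0 < (Complex.I * v ^ 3 - lam).re ∧ 0 < v.im} ∧
          -((lam.im / 2) ^ ((1 : ℝ) / 3)) ≤ w.im}) →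
      (deriv u z * conj (u z)).im < 0 := by
  intro z hz
  have hune : ∃ w, u w ≠ 0 := by
    by_contra h; push_neg at h; exact hu_ne (funext fun w => h w)
  set x := z.re with hx'
  set y := z.im with hy'
  have hzeq : ((x : ℂ) + (y : ℂ)*Complex.I) = z := Complex.re_add_im z
  set c : ℝ := (lam.im/2) ^ ((1:ℝ)/3) with hc
  have hc0 : 0 < c := Real.rpow_pos_of_pos (by linarith) _
  have hc3 : 2*c^3 = lam.im := by
    have h1 : c^(3:ℕ) = lam.im/2 := by
      rw [hc, ← Real.rpow_natCast ((lam.im/2) ^ ((1:ℝ)/3)) 3, ← Real.rpow_mul (by linarith)]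
      norm_num
    have h2 : c^(3:ℕ) = c^3 := by norm_num
    linarith [h1, h2.symm.trans h1]
  have hzre : ((x : ℂ) + (y : ℂ)*Complex.I).re = x := by simp
  have hzim : ((x : ℂ) + (y : ℂ)*Complex.I).im = y := by simp
  rw [← hzeq] at hz ⊢
  simp only [Set.mem_union, Set.mem_setOf_eq, Pim lam x y, Pre lam x y, hzre, hzim] at hz
  have strip : ∀ (x' y' : ℝ), |y'| ≤ c →
      (deriv u (↑x' + ↑y'*Complex.I) * (starRingEnd ℂ) (u (↑x' + ↑y'*Complex.I))).im < 0 := by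
    intro x' y' hy2
    by_cases hQ : x'^3 - 3*x'*y'^2 - lam.im ≤ 0
    · exact Wneg_left hbeta hu_entire hode hdecay hune x' y'
        (fun t ht => P2 hbeta hc3 hy2 hQ ht)
    · push_neg at hQ
      have hx2 : 0 < x' := by
        by_contra hx3; push_neg at hx3
        exact absurd (P3 hbeta hc3 hy2 hx3) (by linarith)
      exact Wneg_right hbeta hu_entire hode hdecay hune x' y' hx2 hQ
  rcases hz with (⟨hQ, hxpos⟩ | ⟨hQ, hxle⟩) | ⟨hA, hyge⟩
  · exact Wneg_right hbeta hu_entire hode hdecay hune x y hxpos hQ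
  · exact Wneg_left hbeta hu_entire hode hdecay hune x y
      (fun t ht => P5 hbeta hc3 hc0 hxle hQ ht)
  · by_cases hyc : y ≤ c
    · exact strip x y (abs_le.mpr ⟨by linarith, hyc⟩)
    · push_neg at hyc
      have hy0 : 0 < y := lt_trans hc0 hyc
      have hR : y^3 - 3*x^2*y - lam.re ≤ 0 := by
        by_contra hR; push_neg at hR; exact hA ⟨hR, hy0⟩
      have hα := alpha_pos hbeta hu_entire hu_ne hode hdecay
      have hDv : ∀ s ∈ Set.Icc (0:ℝ) y,
          (s^3 - 3*x^2*s - lam.re) * Complex.normSq (u (↑x + ↑s*Complex.I))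
            - Complex.normSq (deriv u (↑x + ↑s*Complex.I)) ≤ 0 := by
        intro s hs
        have h1 : s^3 - 3*x^2*s ≤ lam.re := P6 hα (by linarith) hs.1 hs.2
        have h2 := Complex.normSq_nonneg (u (↑x + ↑s*Complex.I))
        have h3 := Complex.normSq_nonneg (deriv u (↑x + ↑s*Complex.I))
        nlinarith
      have ftc : (∫ s in (0:ℝ)..y,
          ((s^3 - 3*x^2*s - lam.re) * Complex.normSq (u (↑x + ↑s*Complex.I))
            - Complex.normSq (deriv u (↑x + ↑s*Complex.I)))) =
          (deriv u (↑x + ↑y*Complex.I) * (starRingEnd ℂ) (u (↑x + ↑y*Complex.I))).im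
          - (deriv u (↑x + ↑(0:ℝ)*Complex.I) * (starRingEnd ℂ) (u (↑x + ↑(0:ℝ)*Complex.I))).im :=
        intervalIntegral.integral_eq_sub_of_hasDerivAt (fun s _ => W_deriv_vert hu_entire hode x s)
          ((contD_vert hu_entire x).intervalIntegrable 0 y)
      have hint : (∫ s in (0:ℝ)..y,
          ((s^3 - 3*x^2*s - lam.re) * Complex.normSq (u (↑x + ↑s*Complex.I))
            - Complex.normSq (deriv u (↑x + ↑s*Complex.I)))) ≤ 0 := by
        have h1 : 0 ≤ ∫ s in (0:ℝ)..y,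
            -((s^3 - 3*x^2*s - lam.re) * Complex.normSq (u (↑x + ↑s*Complex.I))
              - Complex.normSq (deriv u (↑x + ↑s*Complex.I))) :=
          intervalIntegral.integral_nonneg hy0.le (fun s hs => by
            have := hDv s hs; linarith)
        rw [intervalIntegral.integral_neg] at h1
        linarith
      have base := strip x 0 (by simpa using hc0.le)
      rw [ftc] at hint
      linarith
end

section
/- Assume β = Im λ > 0, and let ω₄ be a root of the equation iz³ = λ with Re ω₄ > 0 and Im ω₄ < 0 (the root in the fourth quadrant). Then Re(u'(z)·conj(u(z))) < 0 for every z in the set A₃ ∪ D₃ ∪ {z ∈ B₁ : Re z ≥ Re ω₄}, where D₃ := {x+iy ∈ ℂ : x+iy ∉ A₃ and there exists t > y with x+it ∈ A₃} (the region below A₃). -/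
open Complex Real ComplexConjugate

open Filter Set

namespace PTCubicAux

lemma deriv_diff {f : ℂ → ℂ} (hf : Differentiable ℂ f) : Differentiable ℂ (deriv f) :=
  analyticOnNhd_univ_iff_differentiable.mp
    ((analyticOnNhd_univ_iff_differentiable.mpr hf).deriv)

lemma deriv2 {lam : ℂ} {u : ℂ → ℂ}
    (hode : ∀ w : ℂ, iteratedDeriv 2 u w = (Complex.I * w ^ 3 - lam) * u w) (w : ℂ) :
    deriv (deriv u) w = (Complex.I * w ^ 3 - lam) * u w := by
  rw [← hode w, show (2:ℕ) = 1 + 1 from rfl, iteratedDeriv_succ, iteratedDeriv_one]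

lemma re_formula (lam : ℂ) (x y : ℝ) :
    (Complex.I * ((x:ℂ) + (y:ℂ)*Complex.I)^3 - lam).re = y^3 - 3*x^2*y - lam.re := by
  simp [Complex.mul_re, Complex.mul_im, pow_succ]; ring

lemma im_formula (lam : ℂ) (x y : ℝ) :
    (Complex.I * ((x:ℂ) + (y:ℂ)*Complex.I)^3 - lam).im = x^3 - 3*x*y^2 - lam.im := by
  simp [Complex.mul_re, Complex.mul_im, pow_succ]; ring

lemma not_both_zero {lam : ℂ} {u : ℂ → ℂ}
    (hu : Differentiable ℂ u) (hu_ne : u ≠ 0)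
    (hode : ∀ w : ℂ, iteratedDeriv 2 u w = (Complex.I * w ^ 3 - lam) * u w)
    (z₀ : ℂ) (h0 : u z₀ = 0) (h1 : deriv u z₀ = 0) : False := by
  have hu' : Differentiable ℂ (deriv u) := deriv_diff hu
  have claim : ∀ n : ℕ, ∃ a b : ℂ → ℂ, Differentiable ℂ a ∧ Differentiable ℂ b ∧
      ∀ w, iteratedDeriv n u w = a w * u w + b w * deriv u w := by
    intro n
    induction n with
    | zero => exact ⟨fun _ => 1, fun _ => 0, differentiable_const _, differentiable_const _,
        by simp⟩
    | succ n ih =>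
      obtain ⟨a, b, ha, hb, hab⟩ := ih
      refine ⟨fun w => deriv a w + b w * (Complex.I * w ^ 3 - lam),
        fun w => a w + deriv b w, ?_, ?_, ?_⟩
      · exact (deriv_diff ha).add (hb.mul (((differentiable_const _).mul
          (differentiable_pow 3)).sub (differentiable_const _)))
      · exact ha.add (deriv_diff hb)
      · intro w
        rw [iteratedDeriv_succ]
        have heq : deriv (iteratedDeriv n u) w
            = deriv (fun w => a w * u w + b w * deriv u w) w := by
          congr 1; funext v; exact hab v
        rw [heq]
        have hd : HasDerivAt (fun w => a w * u w + b w * deriv u w)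
            (deriv a w * u w + a w * deriv u w
              + (deriv b w * deriv u w + b w * deriv (deriv u) w)) w :=
          (((ha w).hasDerivAt.mul (hu w).hasDerivAt).add
            ((hb w).hasDerivAt.mul ((hu' w).hasDerivAt)))
        rw [hd.deriv, deriv2 hode]
        ring
  have hcoeff : ∀ n : ℕ, iteratedDeriv n u z₀ = 0 := by
    intro n
    obtain ⟨a, b, -, -, hab⟩ := claim n
    rw [hab z₀, h0, h1]; ring
  apply hu_ne
  funext z
  have h := Complex.taylorSeries_eq_of_entire' (c := z₀) (z := z) hu
  simp only [hcoeff, mul_zero, zero_mul, tsum_zero] at h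
  simpa using h.symm

lemma hasDerivAt_horiz {lam : ℂ} {u : ℂ → ℂ}
    (hu : Differentiable ℂ u)
    (hode : ∀ w : ℂ, iteratedDeriv 2 u w = (Complex.I * w ^ 3 - lam) * u w)
    (y x : ℝ) :
    HasDerivAt (fun s : ℝ => (deriv u ((s:ℂ) + (y:ℂ)*Complex.I)
        * conj (u ((s:ℂ) + (y:ℂ)*Complex.I))).re)
      ((y^3 - 3*x^2*y - lam.re) * Complex.normSq (u ((x:ℂ) + (y:ℂ)*Complex.I))
        + Complex.normSq (deriv u ((x:ℂ) + (y:ℂ)*Complex.I))) x := by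
  have hu' : Differentiable ℂ (deriv u) := deriv_diff hu
  set z : ℂ := (x:ℂ) + (y:ℂ)*Complex.I with hz
  have f1 : HasDerivAt (fun s : ℝ => deriv u ((s:ℂ) + (y:ℂ)*Complex.I))
      (deriv (deriv u) z * 1) x :=
    by
      have h : HasDerivAt (deriv u ∘ fun w : ℂ => id w + (y:ℂ)*Complex.I) (deriv (deriv u) z * 1)
          (x:ℂ) := (hu' z).hasDerivAt.comp (x:ℂ) ((hasDerivAt_id (x:ℂ)).add_const _)
      exact HasDerivAt.comp_ofReal h
  have f2 : HasDerivAt (fun s : ℝ => u ((s:ℂ) + (y:ℂ)*Complex.I)) (deriv u z * 1) x :=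
    HasDerivAt.comp_ofReal ((hu z).hasDerivAt.comp (x:ℂ) ((hasDerivAt_id (x:ℂ)).add_const _))
  have f3 : HasDerivAt (fun s : ℝ => conj (u ((s:ℂ) + (y:ℂ)*Complex.I)))
      (conj (deriv u z * 1)) x := by
    simpa only [Complex.star_def] using f2.star
  have f4 : HasDerivAt (fun s : ℝ => (deriv u ((s:ℂ) + (y:ℂ)*Complex.I)
        * conj (u ((s:ℂ) + (y:ℂ)*Complex.I))).re)
      ((deriv (deriv u) z * 1 * conj (u z) + deriv u z * conj (deriv u z * 1)).re) x :=
    Complex.reCLM.hasFDerivAt.comp_hasDerivAt x (f1.mul f3)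
  convert f4 using 1
  rw [deriv2 hode, mul_one, mul_one]
  have h1 : (Complex.I * z^3 - lam) * u z * conj (u z)
      = (Complex.I * z^3 - lam) * ((Complex.normSq (u z) : ℝ) : ℂ) := by
    rw [mul_assoc, Complex.mul_conj]
  have h2 : deriv u z * conj (deriv u z) = ((Complex.normSq (deriv u z) : ℝ) : ℂ) :=
    Complex.mul_conj _
  rw [h1, h2, ← re_formula lam x y, ← hz]
  simp [Complex.add_re, Complex.mul_re]

lemma hasDerivAt_vert {lam : ℂ} {u : ℂ → ℂ}
    (hu : Differentiable ℂ u)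
    (hode : ∀ w : ℂ, iteratedDeriv 2 u w = (Complex.I * w ^ 3 - lam) * u w)
    (x y : ℝ) :
    HasDerivAt (fun t : ℝ => (deriv u ((x:ℂ) + (t:ℂ)*Complex.I)
        * conj (u ((x:ℂ) + (t:ℂ)*Complex.I))).re)
      (-(x^3 - 3*x*y^2 - lam.im) * Complex.normSq (u ((x:ℂ) + (y:ℂ)*Complex.I))) y := by
  have hu' : Differentiable ℂ (deriv u) := deriv_diff hu
  set z : ℂ := (x:ℂ) + (y:ℂ)*Complex.I with hz
  have hinner : HasDerivAt (fun w : ℂ => (x:ℂ) + w*Complex.I) Complex.I (y:ℂ) := by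
    simpa using ((hasDerivAt_id ((y:ℂ))).mul_const Complex.I).const_add (x:ℂ)
  have f1 : HasDerivAt (fun t : ℝ => deriv u ((x:ℂ) + (t:ℂ)*Complex.I))
      (deriv (deriv u) z * Complex.I) y :=
    by
      have h : HasDerivAt (deriv u ∘ fun w : ℂ => (x:ℂ) + w*Complex.I)
          (deriv (deriv u) z * Complex.I) (y:ℂ) := (hu' z).hasDerivAt.comp (y:ℂ) hinner
      exact HasDerivAt.comp_ofReal h
  have f2 : HasDerivAt (fun t : ℝ => u ((x:ℂ) + (t:ℂ)*Complex.I))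
      (deriv u z * Complex.I) y :=
    HasDerivAt.comp_ofReal ((hu z).hasDerivAt.comp (y:ℂ) hinner)
  have f3 : HasDerivAt (fun t : ℝ => conj (u ((x:ℂ) + (t:ℂ)*Complex.I)))
      (conj (deriv u z * Complex.I)) y := by
    simpa only [Complex.star_def] using f2.star
  have f4 : HasDerivAt (fun t : ℝ => (deriv u ((x:ℂ) + (t:ℂ)*Complex.I)
        * conj (u ((x:ℂ) + (t:ℂ)*Complex.I))).re)
      ((deriv (deriv u) z * Complex.I * conj (u z)
        + deriv u z * conj (deriv u z * Complex.I)).re) y :=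
    Complex.reCLM.hasFDerivAt.comp_hasDerivAt y (f1.mul f3)
  convert f4 using 1
  rw [deriv2 hode]
  have h1 : (Complex.I * z^3 - lam) * u z * Complex.I * conj (u z)
      = (Complex.I * z^3 - lam) * Complex.I * ((Complex.normSq (u z) : ℝ) : ℂ) := by
    rw [← Complex.mul_conj]; ring
  have h2 : deriv u z * conj (deriv u z * Complex.I)
      = ((Complex.normSq (deriv u z) : ℝ) : ℂ) * conj Complex.I := by
    rw [map_mul, ← mul_assoc, Complex.mul_conj]
  rw [h1, h2, ← im_formula lam x y, ← hz]
  simp [Complex.add_re, Complex.mul_re, Complex.conj_I]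

lemma tendsto_W_zero {u : ℂ → ℂ}
    (hdecay : ∀ M : ℝ, 0 < M → ∃ C₁ > (0 : ℝ), ∃ C₂ > (0 : ℝ), ∀ x y : ℝ, |y| ≤ M →
      ‖u (x + y * Complex.I)‖ + ‖deriv u (x + y * Complex.I)‖
        ≤ C₁ * Real.exp (-(|x| ^ C₂)))
    (y : ℝ) :
    Tendsto (fun s : ℝ => (deriv u ((s:ℂ) + (y:ℂ)*Complex.I)
        * conj (u ((s:ℂ) + (y:ℂ)*Complex.I))).re) atTop (nhds 0) := by
  obtain ⟨C₁, hC₁, C₂, hC₂, hb⟩ := hdecay (|y| + 1) (by positivity)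
  have hbd : ∀ s : ℝ, ‖(deriv u ((s:ℂ) + (y:ℂ)*Complex.I)
      * conj (u ((s:ℂ) + (y:ℂ)*Complex.I))).re‖
      ≤ (C₁ * Real.exp (-(|s| ^ C₂)))^2 := by
    intro s
    have h := hb s y (by linarith [abs_nonneg y])
    set A := ‖u ((s:ℂ) + (y:ℂ)*Complex.I)‖
    set B := ‖deriv u ((s:ℂ) + (y:ℂ)*Complex.I)‖
    have hA : 0 ≤ A := norm_nonneg _
    have hB : 0 ≤ B := norm_nonneg _
    have h1 : ‖(deriv u ((s:ℂ) + (y:ℂ)*Complex.I)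
        * conj (u ((s:ℂ) + (y:ℂ)*Complex.I))).re‖
        ≤ B * A := by
      rw [Real.norm_eq_abs]
      refine le_trans (Complex.abs_re_le_norm _) ?_
      rw [norm_mul, Complex.norm_conj]
    have h2 : B * A ≤ (A + B)^2 := by nlinarith
    have h3 : (A + B)^2 ≤ (C₁ * Real.exp (-(|s| ^ C₂)))^2 := by
      apply pow_le_pow_left₀ (by positivity) h
    linarith
  apply squeeze_zero_norm hbd
  have h1 : Tendsto (fun s : ℝ => |s| ^ C₂) atTop atTop :=
    (tendsto_rpow_atTop hC₂).comp tendsto_abs_atTop_atTop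
  have h2 : Tendsto (fun s : ℝ => Real.exp (-(|s| ^ C₂))) atTop (nhds 0) :=
    Real.tendsto_exp_atBot.comp (tendsto_neg_atTop_atBot.comp h1)
  have h3 : Tendsto (fun s : ℝ => (C₁ * Real.exp (-(|s| ^ C₂)))^2) atTop
      (nhds ((C₁*0)^2)) := ((tendsto_const_nhds.mul h2).pow 2)
  simpa using h3

section
variable {lam : ℂ} {u : ℂ → ℂ}

lemma ray_neg
    (hhoriz : ∀ y x : ℝ, HasDerivAt (fun s : ℝ => (deriv u ((s:ℂ) + (y:ℂ)*Complex.I)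
        * conj (u ((s:ℂ) + (y:ℂ)*Complex.I))).re)
      ((y^3 - 3*x^2*y - lam.re) * Complex.normSq (u ((x:ℂ) + (y:ℂ)*Complex.I))
        + Complex.normSq (deriv u ((x:ℂ) + (y:ℂ)*Complex.I))) x)
    (hlim : ∀ y : ℝ, Tendsto (fun s : ℝ => (deriv u ((s:ℂ) + (y:ℂ)*Complex.I)
        * conj (u ((s:ℂ) + (y:ℂ)*Complex.I))).re) atTop (nhds 0))
    (hnv : ∀ w : ℂ, u w = 0 → deriv u w = 0 → False)
    {x y : ℝ} (hx : 0 < x) (hy : y < 0) (hre : 0 ≤ y^3 - 3*x^2*y - lam.re) :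
    (deriv u ((x:ℂ) + (y:ℂ)*Complex.I) * conj (u ((x:ℂ) + (y:ℂ)*Complex.I))).re < 0 := by
  set F : ℝ → ℝ := fun s => (deriv u ((s:ℂ) + (y:ℂ)*Complex.I)
      * conj (u ((s:ℂ) + (y:ℂ)*Complex.I))).re with hF
  have hEpos : ∀ s : ℝ, x < s → 0 < deriv F s := by
    intro s hs
    rw [(hhoriz y s).deriv]
    have h1 : 0 < y^3 - 3*s^2*y - lam.re := by
      nlinarith [mul_pos (mul_pos (sub_pos.2 hs) (by linarith : (0:ℝ) < s + x))
        (by linarith : (0:ℝ) < -y)]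
    rcases eq_or_ne (u ((s:ℂ) + (y:ℂ)*Complex.I)) 0 with h | h
    · have h2 : deriv u ((s:ℂ) + (y:ℂ)*Complex.I) ≠ 0 := fun hd => hnv _ h hd
      have h3 := Complex.normSq_pos.mpr h2
      have h4 := Complex.normSq_nonneg (u ((s:ℂ) + (y:ℂ)*Complex.I))
      nlinarith
    · have hnq := Complex.normSq_pos.mpr h
      have hnd := Complex.normSq_nonneg (deriv u ((s:ℂ) + (y:ℂ)*Complex.I))
      nlinarith
  have hcont : ContinuousOn F (Ici x) :=
    (continuous_iff_continuousAt.mpr fun s => (hhoriz y s).continuousAt).continuousOn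
  have hmono : StrictMonoOn F (Ici x) := by
    apply strictMonoOn_of_deriv_pos (convex_Ici x) hcont
    intro s hs
    rw [interior_Ici] at hs
    exact hEpos s hs
  have h1 : F x < F (x+1) := hmono (self_mem_Ici)
    (by simp only [mem_Ici]; linarith) (by linarith)
  have h2 : F (x+1) ≤ 0 := by
    apply ge_of_tendsto (hlim y)
    filter_upwards [eventually_ge_atTop (x+1)] with s hs
    rcases eq_or_lt_of_le hs with h | h
    · rw [← h]
    · exact le_of_lt (hmono (by simp only [mem_Ici]; linarith)
        (by simp only [mem_Ici]; linarith) h)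
  linarith

lemma vert_mono
    (hvert : ∀ x y : ℝ, HasDerivAt (fun t : ℝ => (deriv u ((x:ℂ) + (t:ℂ)*Complex.I)
        * conj (u ((x:ℂ) + (t:ℂ)*Complex.I))).re)
      (-(x^3 - 3*x*y^2 - lam.im) * Complex.normSq (u ((x:ℂ) + (y:ℂ)*Complex.I))) y)
    {x y s : ℝ} (hys : y ≤ s)
    (him : ∀ r ∈ Icc y s, x^3 - 3*x*r^2 - lam.im ≤ 0) :
    (deriv u ((x:ℂ) + (y:ℂ)*Complex.I) * conj (u ((x:ℂ) + (y:ℂ)*Complex.I))).re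
      ≤ (deriv u ((x:ℂ) + (s:ℂ)*Complex.I) * conj (u ((x:ℂ) + (s:ℂ)*Complex.I))).re := by
  set G : ℝ → ℝ := fun t => (deriv u ((x:ℂ) + (t:ℂ)*Complex.I)
      * conj (u ((x:ℂ) + (t:ℂ)*Complex.I))).re with hG
  have hcont : ContinuousOn G (Icc y s) :=
    (continuous_iff_continuousAt.mpr fun t => (hvert x t).continuousAt).continuousOn
  have hmono : MonotoneOn G (Icc y s) := by
    apply monotoneOn_of_deriv_nonneg (convex_Icc y s) hcont
      (fun t _ => ((hvert x t).differentiableAt.differentiableWithinAt))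
    intro r hr
    rw [interior_Icc] at hr
    rw [(hvert x r).deriv]
    have h1 := him r (Ioo_subset_Icc_self hr)
    have h2 := Complex.normSq_nonneg (u ((x:ℂ) + (r:ℂ)*Complex.I))
    nlinarith
  exact hmono (left_mem_Icc.mpr hys) (right_mem_Icc.mpr hys) hys

lemma vert_anti
    (hvert : ∀ x y : ℝ, HasDerivAt (fun t : ℝ => (deriv u ((x:ℂ) + (t:ℂ)*Complex.I)
        * conj (u ((x:ℂ) + (t:ℂ)*Complex.I))).re)
      (-(x^3 - 3*x*y^2 - lam.im) * Complex.normSq (u ((x:ℂ) + (y:ℂ)*Complex.I))) y)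
    {x y s : ℝ} (hys : y ≤ s)
    (him : ∀ r ∈ Icc y s, 0 ≤ x^3 - 3*x*r^2 - lam.im) :
    (deriv u ((x:ℂ) + (s:ℂ)*Complex.I) * conj (u ((x:ℂ) + (s:ℂ)*Complex.I))).re
      ≤ (deriv u ((x:ℂ) + (y:ℂ)*Complex.I) * conj (u ((x:ℂ) + (y:ℂ)*Complex.I))).re := by
  set G : ℝ → ℝ := fun t => (deriv u ((x:ℂ) + (t:ℂ)*Complex.I)
      * conj (u ((x:ℂ) + (t:ℂ)*Complex.I))).re with hG
  have hcont : ContinuousOn G (Icc y s) :=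
    (continuous_iff_continuousAt.mpr fun t => (hvert x t).continuousAt).continuousOn
  have hanti : AntitoneOn G (Icc y s) := by
    apply antitoneOn_of_deriv_nonpos (convex_Icc y s) hcont
      (fun t _ => ((hvert x t).differentiableAt.differentiableWithinAt))
    intro r hr
    rw [interior_Icc] at hr
    rw [(hvert x r).deriv]
    have h1 := him r (Ioo_subset_Icc_self hr)
    have h2 := Complex.normSq_nonneg (u ((x:ℂ) + (r:ℂ)*Complex.I))
    nlinarith
  exact hanti (left_mem_Icc.mpr hys) (right_mem_Icc.mpr hys) hys

end

lemma curve_mono {a b x y : ℝ} (ha : 0 < a) (hb : b < 0) (hax : a ≤ x) (hy : y < 0)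
    (hbeta' : 0 < a^3 - 3*a*b^2)
    (E : x^3 - 3*x*y^2 = a^3 - 3*a*b^2) :
    b^3 - 3*a^2*b ≤ y^3 - 3*x^2*y := by
  have hx : 0 < x := lt_of_lt_of_le ha hax
  have hx3 : 3*y^2 < x^2 := by nlinarith
  have ha3 : 3*b^2 < a^2 := by nlinarith
  have key : 0 ≤ (x-a)*(x^2+a*x+a^2-3*b^2) :=
    mul_nonneg (by linarith) (by nlinarith)
  have hy2 : b^2 ≤ y^2 := by nlinarith [key, mul_pos hx hx]
  have hx2 : a^2 ≤ x^2 := by nlinarith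
  have hR : 0 < b^3 - 3*a^2*b := by nlinarith
  have hL : 0 ≤ y^3 - 3*x^2*y := by nlinarith
  have hsq : (y^3 - 3*x^2*y)^2 - (b^3 - 3*a^2*b)^2
      = (x^2+y^2)^3 - (a^2+b^2)^3 := by
    linear_combination (-(x^3 - 3*x*y^2 + a^3 - 3*a*b^2)) * E
  have hsum : a^2+b^2 ≤ x^2+y^2 := by linarith
  have hpow : (a^2+b^2)^3 ≤ (x^2+y^2)^3 := pow_le_pow_left₀ (by positivity) hsum 3
  have hLR : (b^3 - 3*a^2*b)^2 ≤ (y^3 - 3*x^2*y)^2 := by linarith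
  nlinarith [hR, hL, hLR]

end PTCubicAux

/-- Let `u` be an eigenfunction of the cubic PT-symmetric oscillator
`-u'' - (iz)³u = lam·u` with eigenvalue `lam = α + iβ`, assume `β = Im lam > 0`, and
let `ω₄` be the root of `iz³ = lam` in the fourth quadrant.  Then
`Re(u'(z)·conj(u(z))) < 0` for every `z ∈ A₃ ∪ D₃ ∪ {z ∈ B₁ : Re z ≥ Re ω₄}`, where
`A₃ = {z : Re(iz³-lam) > 0, Re z > 0, Im z < 0}`,
`D₃ = {x+iy ∉ A₃ : ∃ t > y, x+it ∈ A₃}` (the region below `A₃`), and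
`B₁ = {z : Im(iz³-lam) > 0, Re z > 0}`. -/
theorem re_wronskian_neg_region
    (lam : ℂ) (u : ℂ → ℂ)
    (hbeta : 0 < lam.im)
    (hu_entire : Differentiable ℂ u)
    (hu_ne : u ≠ 0)
    (hode : ∀ w : ℂ, iteratedDeriv 2 u w = (Complex.I * w ^ 3 - lam) * u w)
    (hdecay : ∀ M : ℝ, 0 < M → ∃ C₁ > (0 : ℝ), ∃ C₂ > (0 : ℝ), ∀ x y : ℝ, |y| ≤ M →
      ‖u (x + y * Complex.I)‖ + ‖deriv u (x + y * Complex.I)‖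
        ≤ C₁ * Real.exp (-(|x| ^ C₂)))
    (ω₄ : ℂ) (hω₄ : Complex.I * ω₄ ^ 3 = lam) (hω₄re : 0 < ω₄.re) (hω₄im : ω₄.im < 0) :
    ∀ z : ℂ,
      (z ∈ {w : ℂ | 0 < (Complex.I * w ^ 3 - lam).re ∧ 0 < w.re ∧ w.im < 0} ∪
        {w : ℂ | w ∉ {v : ℂ | 0 < (Complex.I * v ^ 3 - lam).re ∧ 0 < v.re ∧ v.im < 0} ∧
          ∃ t : ℝ, w.im < t ∧
            (w.re + t * Complex.I) ∈
              {v : ℂ | 0 < (Complex.I * v ^ 3 - lam).re ∧ 0 < v.re ∧ v.im < 0}} ∪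
        {w : ℂ | (0 < (Complex.I * w ^ 3 - lam).im ∧ 0 < w.re) ∧ ω₄.re ≤ w.re}) →
      (deriv u z * conj (u z)).re < 0 := by
  intro z hz
  have hnv := PTCubicAux.not_both_zero hu_entire hu_ne hode
  have hhoriz := PTCubicAux.hasDerivAt_horiz hu_entire hode
  have hvert := PTCubicAux.hasDerivAt_vert hu_entire hode
  have hlim := PTCubicAux.tendsto_W_zero hdecay
  have hray : ∀ x y : ℝ, 0 < x → y < 0 → 0 ≤ y^3 - 3*x^2*y - lam.re →
      (deriv u ((x:ℂ) + (y:ℂ)*Complex.I) * conj (u ((x:ℂ) + (y:ℂ)*Complex.I))).re < 0 :=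
    fun x y hx hy hre => PTCubicAux.ray_neg hhoriz hlim hnv hx hy hre
  have hzeq : (z.re:ℂ) + (z.im:ℂ)*Complex.I = z := Complex.re_add_im z
  set x : ℝ := z.re with hxdef
  set y : ℝ := z.im with hydef
  simp only [Set.mem_union, Set.mem_setOf_eq] at hz
  rcases hz with (hA | hD) | hB
  · -- A₃ case
    obtain ⟨h1, h2, h3⟩ := hA
    rw [← hzeq, PTCubicAux.re_formula] at h1
    have := hray x y h2 h3 h1.le
    rwa [hzeq] at this
  · -- D₃ case
    obtain ⟨hnotA, t, hty, hA'⟩ := hD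
    have hx : 0 < x := by simpa using hA'.2.1
    have ht0 : t < 0 := by simpa using hA'.2.2
    have hy : y < 0 := lt_trans hty ht0
    have hht : 0 < t^3 - 3*x^2*t - lam.re := by
      have := hA'.1
      rwa [PTCubicAux.re_formula] at this
    have hhy : y^3 - 3*x^2*y - lam.re ≤ 0 := by
      by_contra hc
      push_neg at hc
      exact hnotA ⟨by rw [← hzeq, PTCubicAux.re_formula]; linarith, hx, hy⟩
    have hylt : y < -x := by
      by_contra hge
      push_neg at hge
      have h1 : 0 ≤ x + y := by linarith
      have h2 : (0:ℝ) ≤ -t := by linarith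
      have hp1 : 0 ≤ (x+y)*(-t) := mul_nonneg h1 h2
      have hp2 : 0 < x*(x+t) := mul_pos hx (by linarith)
      have hp3 : 0 < (x+t)*(x-t) := mul_pos (by linarith) (by linarith)
      have hp4 : 0 ≤ (x+y)*(x-y) := mul_nonneg h1 (by linarith)
      have hq : 0 < 3*x^2 - t^2 - t*y - y^2 := by nlinarith [hp1, hp2, hp3, hp4]
      nlinarith [mul_pos (sub_pos.2 hty) hq]
    set s : ℝ := min t (-x) with hsdef
    have hs_le : s ≤ -x := min_le_right _ _
    have hys : y < s := lt_min hty hylt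
    have hs0 : s < 0 := by linarith
    have hhs : 0 < s^3 - 3*x^2*s - lam.re := by
      rcases le_or_gt t (-x) with h | h
      · rw [hsdef, min_eq_left h]; exact hht
      · rw [hsdef, min_eq_right h.le]
        nlinarith [hht, mul_nonneg (sq_nonneg (t+x)) (by linarith : (0:ℝ) ≤ 2*x - t)]
    have him : ∀ r ∈ Set.Icc y s, x^3 - 3*x*r^2 - lam.im ≤ 0 := by
      intro r hr
      have hr2 : 0 ≤ r^2 - x^2 := by
        nlinarith [mul_nonneg (by linarith [hr.2] : (0:ℝ) ≤ -r - x)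
          (by linarith [hr.2] : (0:ℝ) ≤ x - r)]
      nlinarith [mul_pos hx hx, mul_pos (mul_pos hx hx) hx, hbeta,
        mul_nonneg (le_of_lt hx) hr2]
    have hle := PTCubicAux.vert_mono hvert hys.le him
    have hlt := hray x s hx hs0 hhs.le
    have : (deriv u ((x:ℂ) + (y:ℂ)*Complex.I)
        * conj (u ((x:ℂ) + (y:ℂ)*Complex.I))).re < 0 := lt_of_le_of_lt hle hlt
    rwa [hzeq] at this
  · -- B₁ case
    obtain ⟨⟨him_pos, hx⟩, hax⟩ := hB
    rw [← hzeq, PTCubicAux.im_formula] at him_pos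
    set a : ℝ := ω₄.re with hadef
    set b : ℝ := ω₄.im with hbdef
    have h0 : Complex.I * ((a:ℂ) + (b:ℂ)*Complex.I)^3 - lam = 0 := by
      rw [hadef, hbdef, Complex.re_add_im, hω₄, sub_self]
    have hα : b^3 - 3*a^2*b - lam.re = 0 := by
      have := congrArg Complex.re h0
      rwa [PTCubicAux.re_formula] at this
    have hβ : a^3 - 3*a*b^2 - lam.im = 0 := by
      have := congrArg Complex.im h0
      rwa [PTCubicAux.im_formula] at this
    have h3x : (0:ℝ) < 3*x := by linarith
    set q : ℝ := (x^3 - lam.im)/(3*x) with hqdef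
    have hy2q : y^2 < q := by
      rw [hqdef, lt_div_iff₀ h3x]; nlinarith
    have hq0 : 0 < q := lt_of_le_of_lt (sq_nonneg y) hy2q
    set yb : ℝ := -Real.sqrt q with hybdef
    have hyb2 : yb^2 = q := by
      rw [hybdef, neg_pow, Real.sq_sqrt hq0.le]; ring
    have hyb_neg : yb < 0 := by
      rw [hybdef]
      exact neg_lt_zero.mpr (Real.sqrt_pos.mpr hq0)
    have hyabs : |y| < Real.sqrt q := by
      rw [← Real.sqrt_sq_eq_abs]
      exact Real.sqrt_lt_sqrt (sq_nonneg y) hy2q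
    have hyby : yb < y := by
      have := neg_abs_le y
      rw [hybdef]; linarith
    have hqmul : q*(3*x) = x^3 - lam.im := div_mul_cancel₀ _ (ne_of_gt h3x)
    have him_icc : ∀ r ∈ Set.Icc yb y, 0 ≤ x^3 - 3*x*r^2 - lam.im := by
      intro r hr
      have hr2 : r^2 ≤ q := by
        have h1 : -Real.sqrt q ≤ r := by rw [← hybdef]; exact hr.1
        have h2 : r ≤ Real.sqrt q := le_trans hr.2 (by linarith [le_abs_self y])
        have := sq_le_sq' h1 h2
        rwa [Real.sq_sqrt hq0.le] at this
      nlinarith [mul_le_mul_of_nonneg_left hr2 h3x.le]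
    have hle := PTCubicAux.vert_anti hvert hyby.le him_icc
    have hE : x^3 - 3*x*yb^2 = a^3 - 3*a*b^2 := by
      linear_combination -hqmul - hβ - (3*x)*hyb2
    have hcurve := PTCubicAux.curve_mono hω₄re hω₄im hax hyb_neg (by linarith) hE
    have hre_yb : 0 ≤ yb^3 - 3*x^2*yb - lam.re := by
      linarith [hcurve, hα]
    have hlt := hray x yb hx hyb_neg hre_yb
    have : (deriv u ((x:ℂ) + (y:ℂ)*Complex.I)
        * conj (u ((x:ℂ) + (y:ℂ)*Complex.I))).re < 0 := lt_of_le_of_lt hle hlt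
    rwa [hzeq] at this
end

section
/- Suppose λ is real (β = 0) and that u is normalized so that u(z) = conj(u(−conj(z))) for all z ∈ ℂ (PT-symmetric normalization with respect to the imaginary axis). Then Re(u'(z)·conj(u(z))) < 0 for every z in closure(A₁) ∩ {z : Re z < 0}, and Re(u'(z)·conj(u(z))) > 0 for every z in closure(A₁) ∩ {z : Re z > 0}. -/
open Complex Real ComplexConjugate

/-- Let `u` be an eigenfunction of the cubic PT-symmetric oscillator
`-u'' - (iz)³u = lam·u` with real eigenvalue `lam`, normalized so that
`u(z) = conj(u(-conj z))` for all `z` (PT-symmetry with respect to the imaginary axis).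
Then `Re(u'(z)·conj(u(z))) < 0` on `closure(A₁) ∩ {Re z < 0}` and
`Re(u'(z)·conj(u(z))) > 0` on `closure(A₁) ∩ {Re z > 0}`, where
`A₁ = {z : Re(iz³-lam) > 0, Im z > 0}`. -/
theorem re_wronskian_sign_real_eigenvalue
    (lam : ℂ) (u : ℂ → ℂ)
    (hbeta : lam.im = 0)
    (hu_entire : Differentiable ℂ u)
    (hu_ne : u ≠ 0)
    (hode : ∀ w : ℂ, iteratedDeriv 2 u w = (Complex.I * w ^ 3 - lam) * u w)
    (hdecay : ∀ M : ℝ, 0 < M → ∃ C₁ > (0 : ℝ), ∃ C₂ > (0 : ℝ), ∀ x y : ℝ, |y| ≤ M →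
      ‖u (x + y * Complex.I)‖ + ‖deriv u (x + y * Complex.I)‖
        ≤ C₁ * Real.exp (-(|x| ^ C₂)))
    (hsym : ∀ z : ℂ, u z = conj (u (-(conj z)))) :
    ∀ z ∈ closure {v : ℂ | 0 < (Complex.I * v ^ 3 - lam).re ∧ 0 < v.im},
      (z.re < 0 → (deriv u z * conj (u z)).re < 0) ∧
      (0 < z.re → 0 < (deriv u z * conj (u z)).re) := by
  have hA : AnalyticOnNhd ℂ u Set.univ := analyticOnNhd_univ_iff_differentiable.mpr hu_entire
  have hA' : AnalyticOnNhd ℂ (deriv u) Set.univ := hA.deriv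
  have hd2 : Differentiable ℂ (deriv u) := fun z => (hA' z trivial).differentiableAt
  have hderiv2 : ∀ w, deriv (deriv u) w = (Complex.I * w ^ 3 - lam) * u w := by
    intro w
    rw [← hode w, iteratedDeriv_succ, iteratedDeriv_one]
  -- identity-theorem contradiction: deriv u cannot vanish frequently near a point
  have hne0 : ∀ z₀ : ℂ, ¬ (∃ᶠ z in nhdsWithin z₀ {z₀}ᶜ, deriv u z = 0) := by
    intro z₀ hfreq
    have hzero : Set.EqOn (deriv u) 0 Set.univ :=
      hA'.eqOn_zero_of_preconnected_of_frequently_eq_zero isPreconnected_univ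
        (Set.mem_univ z₀) hfreq
    have hdz : deriv u = fun _ => (0 : ℂ) := funext fun x => hzero (Set.mem_univ x)
    have hc : ∀ w : ℂ, u w = u 0 := fun w =>
      is_const_of_deriv_eq_zero hu_entire (fun x => hzero (Set.mem_univ x)) w 0
    have h2 : ∀ w : ℂ, (Complex.I * w ^ 3 - lam) * u 0 = 0 := by
      intro w
      rw [← hc w, ← hderiv2 w, hdz]
      simp
    have hu0 : u 0 = 0 := by
      by_contra hc0
      have e0 := h2 0
      have e1 := h2 1
      rw [mul_eq_zero] at e0 e1
      rcases e0 with e0 | e0; swap; · exact hc0 e0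
      rcases e1 with e1 | e1; swap; · exact hc0 e1
      have : lam = 0 := by simpa using e0
      rw [this] at e1
      simp [Complex.I_ne_zero] at e1
    exact hu_ne (funext fun w => by simp [hc w, hu0])
  -- derivative of t ↦ u(t+iy)
  have hq : ∀ y t : ℝ, HasDerivAt (fun s : ℝ => u (↑s + ↑y * Complex.I))
      (deriv u (↑t + ↑y * Complex.I)) t := by
    intro y t
    have h1 : HasDerivAt (fun w : ℂ => u (w + ↑y * Complex.I))
        (deriv u (↑t + ↑y * Complex.I)) ↑t := by
      have h := ((hu_entire (↑t + ↑y * Complex.I)).hasDerivAt).comp (↑t : ℂ)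
        ((hasDerivAt_id (↑t : ℂ)).add_const (↑y * Complex.I))
      simp only [mul_one, id] at h
      exact h
    exact h1.comp_ofReal
  have hp : ∀ y t : ℝ, HasDerivAt (fun s : ℝ => deriv u (↑s + ↑y * Complex.I))
      ((Complex.I * (↑t + ↑y * Complex.I) ^ 3 - lam) * u (↑t + ↑y * Complex.I)) t := by
    intro y t
    have h1 : HasDerivAt (fun w : ℂ => deriv u (w + ↑y * Complex.I))
        (deriv (deriv u) (↑t + ↑y * Complex.I)) ↑t := by
      have h := ((hd2 (↑t + ↑y * Complex.I)).hasDerivAt).comp (↑t : ℂ)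
        ((hasDerivAt_id (↑t : ℂ)).add_const (↑y * Complex.I))
      simp only [mul_one, id] at h
      exact h
    rw [hderiv2] at h1
    exact h1.comp_ofReal
  -- the Wronskian real part and the modulus squared
  set φ : ℝ → ℝ → ℝ := fun y t =>
    (deriv u (↑t + ↑y * Complex.I) * (starRingEnd ℂ) (u (↑t + ↑y * Complex.I))).re with hφdef
  set F : ℝ → ℝ → ℝ := fun y t => Complex.normSq (u (↑t + ↑y * Complex.I)) with hFdef
  have hφ : ∀ y t : ℝ, HasDerivAt (φ y)
      (Complex.normSq (deriv u (↑t + ↑y * Complex.I)) +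
        (Complex.I * ((t:ℂ) + (y:ℂ) * Complex.I) ^ 3 - lam).re *
          Complex.normSq (u (↑t + ↑y * Complex.I))) t := by
    intro y t
    have hqc : HasDerivAt (fun s : ℝ => (starRingEnd ℂ) (u (↑s + ↑y * Complex.I)))
        ((starRingEnd ℂ) (deriv u (↑t + ↑y * Complex.I))) t := by
      have h := (Complex.conjCLE.hasFDerivAt.comp_hasDerivAt t (hq y t))
      simp at h
      exact h
    have hmul := (hp y t).mul hqc
    have hre := Complex.reCLM.hasFDerivAt.comp_hasDerivAt t hmul
    refine hre.congr_deriv ?_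
    symm
    rw [Complex.reCLM_apply, mul_assoc, Complex.mul_conj, Complex.mul_conj, Complex.add_re,
      Complex.ofReal_re, Complex.mul_re]
    simp only [Complex.ofReal_re, Complex.ofReal_im, mul_zero, sub_zero]
    ring
  have hF : ∀ y t : ℝ, HasDerivAt (F y) (2 * φ y t) t := by
    intro y t
    have hqc : HasDerivAt (fun s : ℝ => (starRingEnd ℂ) (u (↑s + ↑y * Complex.I)))
        ((starRingEnd ℂ) (deriv u (↑t + ↑y * Complex.I))) t := by
      have h := (Complex.conjCLE.hasFDerivAt.comp_hasDerivAt t (hq y t))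
      simp at h
      exact h
    have hmul := (hq y t).mul hqc
    have hre := Complex.reCLM.hasFDerivAt.comp_hasDerivAt t hmul
    have hFeq : F y = fun s : ℝ =>
        (u (↑s + ↑y * Complex.I) * (starRingEnd ℂ) (u (↑s + ↑y * Complex.I))).re := by
      funext s
      rw [hFdef]
      simp [Complex.mul_conj]
    rw [hFeq]
    refine hre.congr_deriv ?_
    symm
    simp only [Complex.reCLM_apply, Complex.add_re, hφdef]
    have h1 : ∀ a b : ℂ, (a * (starRingEnd ℂ) b).re = (b * (starRingEnd ℂ) a).re := by
      intro a b
      simp [Complex.mul_re, Complex.conj_re, Complex.conj_im]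
      ring
    rw [h1 (u (↑t + ↑y * Complex.I)) (deriv u (↑t + ↑y * Complex.I))]
    ring
  -- evenness of F in t
  have hFeven : ∀ y t : ℝ, F y (-t) = F y t := by
    intro y t
    have harg : -((starRingEnd ℂ) (↑(-t) + ↑y * Complex.I)) = ↑t + ↑y * Complex.I := by
      simp [Complex.ext_iff]
    have := hsym (↑(-t) + ↑y * Complex.I)
    rw [harg] at this
    rw [hFdef]
    simp only
    rw [this, Complex.normSq_conj]
  -- oddness of φ in t
  have hφodd : ∀ y t : ℝ, φ y (-t) = - φ y t := by
    intro y t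
    have h1 : HasDerivAt (F y) (2 * φ y (-t)) (-t) := hF y (-t)
    have h3 : HasDerivAt (F y) (2 * φ y t * (-1)) (-t) := by
      have h2 : HasDerivAt (fun s : ℝ => F y (-s)) (2 * φ y t * (-1)) (-t) := by
        have hinner : HasDerivAt (fun s : ℝ => -s) (-1 : ℝ) (-t) := hasDerivAt_neg (-t)
        have houter : HasDerivAt (F y) (2 * φ y t) (-(-t) : ℝ) := by
          rw [neg_neg]; exact hF y t
        exact houter.comp (-t) hinner
      have : (fun s : ℝ => F y (-s)) = F y := funext fun s => hFeven y s
      rwa [this] at h2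
    have := h1.unique h3
    linarith
  -- main positivity lemma
  have hmain : ∀ y x : ℝ, 0 ≤ y → 0 < x →
      0 ≤ y ^ 3 - 3 * x ^ 2 * y - lam.re → 0 < φ y x := by
    intro y x hy hx hsec
    have hreform : ∀ t : ℝ, (Complex.I * ((t:ℂ) + (y:ℂ) * Complex.I) ^ 3 - lam).re
        = y ^ 3 - 3 * t ^ 2 * y - lam.re := by
      intro t
      simp [Complex.mul_re, Complex.mul_im, pow_succ, Complex.add_re, Complex.add_im,
        Complex.ofReal_re, Complex.ofReal_im, Complex.I_re, Complex.I_im, Complex.sub_re]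
      ring
    have hre : ∀ t ∈ Set.Icc (0:ℝ) x, 0 ≤ (Complex.I * ((t:ℂ) + (y:ℂ) * Complex.I) ^ 3 - lam).re := by
      intro t ht
      rw [hreform]
      nlinarith [ht.1, ht.2, mul_nonneg (mul_nonneg (sub_nonneg.mpr ht.2)
        (by linarith [ht.1, ht.2] : (0:ℝ) ≤ x + t)) hy]
    have hcont : Continuous (φ y) := by
      rw [continuous_iff_continuousAt]
      exact fun t => (hφ y t).continuousAt
    have hmono : MonotoneOn (φ y) (Set.Icc 0 x) := by
      apply monotoneOn_of_deriv_nonneg (convex_Icc 0 x) hcont.continuousOn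
      · exact fun t _ => (hφ y t).differentiableAt.differentiableWithinAt
      · intro t ht
        rw [interior_Icc] at ht
        rw [(hφ y t).deriv]
        exact add_nonneg (Complex.normSq_nonneg _)
          (mul_nonneg (hre t ⟨le_of_lt ht.1, le_of_lt ht.2⟩) (Complex.normSq_nonneg _))
    have hφ0 : φ y 0 = 0 := by
      have := hφodd y 0
      rw [neg_zero] at this
      linarith
    have hge : 0 ≤ φ y x := by
      have := hmono (Set.left_mem_Icc.mpr hx.le) (Set.right_mem_Icc.mpr hx.le) hx.le
      rwa [hφ0] at this
    rcases lt_or_eq_of_le hge with h | h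
    · exact h
    -- degenerate case: φ ≡ 0 on [0,x], derive contradiction
    exfalso
    have hzero : ∀ t ∈ Set.Icc (0:ℝ) x, φ y t = 0 := by
      intro t ht
      have h1 : φ y 0 ≤ φ y t := hmono (Set.left_mem_Icc.mpr hx.le) ht ht.1
      have h2 : φ y t ≤ φ y x := hmono ht (Set.right_mem_Icc.mpr hx.le) ht.2
      rw [hφ0] at h1
      rw [← h] at h2
      linarith
    have hdz : ∀ t ∈ Set.Ioo (0:ℝ) x, deriv u (↑t + ↑y * Complex.I) = 0 := by
      intro t ht
      have hev : φ y =ᶠ[nhds t] (fun _ => (0:ℝ)) := by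
        filter_upwards [Ioo_mem_nhds ht.1 ht.2] with s hs
        exact hzero s ⟨hs.1.le, hs.2.le⟩
      have h0 : HasDerivAt (fun _ : ℝ => (0:ℝ))
          (Complex.normSq (deriv u (↑t + ↑y * Complex.I)) +
            (Complex.I * ((t:ℂ) + (y:ℂ) * Complex.I) ^ 3 - lam).re *
              Complex.normSq (u (↑t + ↑y * Complex.I))) t :=
        hev.hasDerivAt_iff.mp (hφ y t)
      have := h0.unique (hasDerivAt_const t 0)
      have hterm1 : Complex.normSq (deriv u (↑t + ↑y * Complex.I)) = 0 := by
        have h4 := hre t ⟨ht.1.le, ht.2.le⟩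
        nlinarith [Complex.normSq_nonneg (deriv u (↑t + ↑y * Complex.I)),
          Complex.normSq_nonneg (u (↑t + ↑y * Complex.I)),
          mul_nonneg h4 (Complex.normSq_nonneg (u (↑t + ↑y * Complex.I)))]
      exact Complex.normSq_eq_zero.mp hterm1
    -- frequent zeros near c := x/2 + iy
    apply hne0 ((x/2 : ℝ) + (y:ℝ) * Complex.I)
    have hseq : ∀ n : ℕ, deriv u (↑(x/2 + x/(4*(n+1))) + ↑y * Complex.I) = 0 := by
      intro n
      apply hdz
      constructor
      · positivity
      · have h4 : (4:ℝ) ≤ 4*((n:ℝ)+1) := by nlinarith [Nat.cast_nonneg (α := ℝ) n]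
        have hn : x/(4*((n:ℝ)+1)) ≤ x/4 :=
          div_le_div_of_nonneg_left hx.le (by norm_num) h4
        linarith
    have htend : Filter.Tendsto (fun n : ℕ => (↑(x/2 + x/(4*(n+1))) : ℂ) + ↑y * Complex.I)
        Filter.atTop (nhdsWithin ((x/2 : ℝ) + (y:ℝ) * Complex.I) {((x/2 : ℝ) + (y:ℝ) * Complex.I)}ᶜ) := by
      rw [tendsto_nhdsWithin_iff]
      constructor
      · have h1 : Filter.Tendsto (fun n : ℕ => x/2 + x/(4*((n:ℝ)+1))) Filter.atTop (nhds (x/2)) := by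
          have h2 : Filter.Tendsto (fun n : ℕ => x/(4*((n:ℝ)+1))) Filter.atTop (nhds 0) := by
            have hbase : Filter.Tendsto (fun n : ℕ => 1/((n:ℝ)+1)) Filter.atTop (nhds 0) :=
              tendsto_one_div_add_atTop_nhds_zero_nat
            have heq : (fun n : ℕ => x/(4*((n:ℝ)+1))) = (fun n : ℕ => (x/4) * (1/((n:ℝ)+1))) := by
              funext n
              have hne : ((n:ℝ)+1) ≠ 0 := by positivity
              field_simp
            rw [heq]
            simpa using hbase.const_mul (x/4)
          have := Filter.Tendsto.const_add (x/2) h2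
          simpa using this
        have hc : Continuous (fun r : ℝ => (↑r : ℂ) + ↑y * Complex.I) :=
          Complex.continuous_ofReal.add continuous_const
        exact (hc.tendsto _).comp h1
      · apply Filter.Eventually.of_forall
        intro n
        simp only [Set.mem_compl_iff, Set.mem_singleton_iff]
        intro hcontra
        have h5 : ((x/2 + x/(4*((n:ℝ)+1)) : ℝ) : ℂ) = ((x/2 : ℝ) : ℂ) :=
          add_right_cancel hcontra
        have h6 : x/2 + x/(4*((n:ℝ)+1)) = x/2 := Complex.ofReal_inj.mp h5
        have hpos : (0:ℝ) < x/(4*((n:ℝ)+1)) := by positivity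
        linarith
    exact htend.frequently (Filter.Frequently.of_forall hseq)
  -- conclude
  have hclos : closure {v : ℂ | 0 < (Complex.I * v ^ 3 - lam).re ∧ 0 < v.im} ⊆
      {v : ℂ | 0 ≤ (Complex.I * v ^ 3 - lam).re ∧ 0 ≤ v.im} := by
    apply closure_minimal
    · intro v hv
      exact ⟨hv.1.le, hv.2.le⟩
    · have : {v : ℂ | 0 ≤ (Complex.I * v ^ 3 - lam).re ∧ 0 ≤ v.im}
          = {v : ℂ | 0 ≤ (Complex.I * v ^ 3 - lam).re} ∩ {v : ℂ | 0 ≤ v.im} := rfl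
      rw [this]
      apply IsClosed.inter
      · exact isClosed_le continuous_const (Complex.continuous_re.comp
          ((continuous_const.mul (continuous_pow 3)).sub continuous_const))
      · exact isClosed_le continuous_const Complex.continuous_im
  intro z hz
  obtain ⟨h1, h2⟩ := hclos hz
  have hzeq : (↑z.re : ℂ) + ↑z.im * Complex.I = z := Complex.re_add_im z
  have hreform : (Complex.I * ((z.re:ℂ) + (z.im:ℂ) * Complex.I) ^ 3 - lam).re
      = z.im ^ 3 - 3 * z.re ^ 2 * z.im - lam.re := by
    simp [Complex.mul_re, Complex.mul_im, pow_succ, Complex.add_re, Complex.add_im,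
      Complex.ofReal_re, Complex.ofReal_im, Complex.I_re, Complex.I_im, Complex.sub_re]
    ring
  have h1' : 0 ≤ z.im ^ 3 - 3 * z.re ^ 2 * z.im - lam.re := by
    rw [← hreform]
    rw [← hzeq] at h1
    exact h1
  have hφz : (deriv u z * (starRingEnd ℂ) (u z)).re = φ z.im z.re := by
    rw [hφdef]
    simp only
    rw [hzeq]
  constructor
  · intro hx
    rw [hφz]
    have hpos : 0 < φ z.im (-z.re) := by
      apply hmain z.im (-z.re) h2 (by linarith)
      nlinarith
    have := hφodd z.im (-z.re)
    rw [neg_neg] at this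
    linarith
  · intro hx
    rw [hφz]
    exact hmain z.im z.re h2 hx h1'
end

section
/- For every y ∈ ℝ, the integral over x ∈ ℝ of (x³ − 3xy² − β)·|u(x+iy)|² dx equals 0. (That is, the polynomial p(x,y) = x³ − 3xy² − β is orthogonal to |u|² along every horizontal line.) -/
open Complex Real ComplexConjugate MeasureTheory Filter Set Topology Asymptotics

private lemma tendsto_pow_mul_exp_neg_rpow_aux (n : ℕ) {p b : ℝ} (hp : 0 < p) (hb : 0 < b) :
    Tendsto (fun x : ℝ => x ^ n * Real.exp (-(b * x ^ p))) atTop (𝓝 0) := by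
  have h1 := tendsto_rpow_mul_exp_neg_mul_atTop_nhds_zero ((n : ℝ) / p) b hb
  have h3 := h1.comp (tendsto_rpow_atTop hp)
  refine h3.congr' ?_
  filter_upwards [eventually_ge_atTop (1:ℝ)] with x hx
  have hx0 : (0:ℝ) ≤ x := by linarith
  simp only [Function.comp_apply]
  rw [neg_mul]
  congr 1
  rw [← Real.rpow_natCast x n, ← Real.rpow_mul hx0]
  congr 1
  field_simp


set_option maxHeartbeats 1000000 in
/-- Let `u` be an eigenfunction of the cubic PT-symmetric oscillator
`-u'' - (iz)³u = lam·u` with eigenvalue `lam = α + iβ`.  Then for every `y ∈ ℝ`,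
`∫_ℝ (x³ - 3xy² - β)·|u(x+iy)|² dx = 0`. -/
theorem cubic_polynomial_orthogonal_to_abs_u_sq
    (lam : ℂ) (u : ℂ → ℂ)
    (hu_entire : Differentiable ℂ u)
    (hu_ne : u ≠ 0)
    (hode : ∀ w : ℂ, iteratedDeriv 2 u w = (Complex.I * w ^ 3 - lam) * u w)
    (hdecay : ∀ M : ℝ, 0 < M → ∃ C₁ > (0 : ℝ), ∃ C₂ > (0 : ℝ), ∀ x y : ℝ, |y| ≤ M →
      ‖u (x + y * Complex.I)‖ + ‖deriv u (x + y * Complex.I)‖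
        ≤ C₁ * Real.exp (-(|x| ^ C₂))) :
    ∀ y : ℝ,
      ∫ x : ℝ, (x ^ 3 - 3 * x * y ^ 2 - lam.im)
        * ‖u (x + y * Complex.I)‖ ^ 2 = 0 := by
  intro y
  obtain ⟨c, hc, p, hpp, hbound⟩ := hdecay (|y| + 1) (by positivity)
  have hy : |y| ≤ |y| + 1 := by linarith
  set F : ℝ → ℂ := fun x => u ((x:ℂ) + (y:ℂ) * Complex.I) with hFdef
  set G : ℝ → ℂ := fun x => deriv u ((x:ℂ) + (y:ℂ) * Complex.I) with hGdef
  have hFGb : ∀ x : ℝ, ‖F x‖ + ‖G x‖ ≤ c * Real.exp (-(|x| ^ p)) :=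
    fun x => hbound x y hy
  have habsF : ∀ x : ℝ, ‖F x‖ ≤ c * Real.exp (-(|x| ^ p)) := fun x =>
    le_trans (le_add_of_nonneg_right (norm_nonneg _)) (hFGb x)
  have habsG : ∀ x : ℝ, ‖G x‖ ≤ c * Real.exp (-(|x| ^ p)) := fun x =>
    le_trans (le_add_of_nonneg_left (norm_nonneg _)) (hFGb x)
  have hdu : Differentiable ℂ (deriv u) := by
    have hA : AnalyticOnNhd ℂ u Set.univ := analyticOnNhd_univ_iff_differentiable.mpr hu_entire
    exact fun z => (hA.deriv z (Set.mem_univ z)).differentiableAt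
  have hFd : ∀ x : ℝ, HasDerivAt F (G x) x := by
    intro x
    have h0 : HasDerivAt (fun w : ℂ => u (w + (y:ℂ) * Complex.I))
        (deriv u ((x:ℂ) + y * Complex.I)) (x:ℂ) := by
      have h1 := (hu_entire ((x:ℂ) + y * Complex.I)).hasDerivAt
      have h2 : HasDerivAt (fun w : ℂ => w + (y:ℂ) * Complex.I) 1 (x:ℂ) :=
        (hasDerivAt_id _).add_const _
      simpa [Function.comp_def] using h1.comp (x:ℂ) h2
    exact h0.comp_ofReal
  have hGd : ∀ x : ℝ, HasDerivAt G (iteratedDeriv 2 u ((x:ℂ) + (y:ℂ) * Complex.I)) x := by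
    intro x
    have h0 : HasDerivAt (fun w : ℂ => deriv u (w + (y:ℂ) * Complex.I))
        (deriv (deriv u) ((x:ℂ) + y * Complex.I)) (x:ℂ) := by
      have h1 := (hdu ((x:ℂ) + y * Complex.I)).hasDerivAt
      have h2 : HasDerivAt (fun w : ℂ => w + (y:ℂ) * Complex.I) 1 (x:ℂ) :=
        (hasDerivAt_id _).add_const _
      simpa [Function.comp_def] using h1.comp (x:ℂ) h2
    rw [iteratedDeriv_succ, iteratedDeriv_one]
    exact h0.comp_ofReal
  set H : ℝ → ℝ := fun x => (x ^ 3 - 3 * x * y ^ 2 - lam.im) * ‖F x‖ ^ 2 with hHdef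
  set W : ℝ → ℝ := fun x => ((starRingEnd ℂ) (F x) * G x).im with hWdef
  have hWd : ∀ x : ℝ, HasDerivAt W (H x) x := by
    intro x
    have h1 : HasDerivAt (fun t => (starRingEnd ℂ) (F t)) ((starRingEnd ℂ) (G x)) x :=
      (hFd x).star
    have h2 := h1.mul (hGd x)
    have h3 := Complex.imCLM.hasFDerivAt.comp_hasDerivAt x h2
    have h4 : HasDerivAt W
        (((starRingEnd ℂ) (G x) * G x
          + (starRingEnd ℂ) (F x) * iteratedDeriv 2 u ((x:ℂ) + (y:ℂ) * Complex.I)).im) x := by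
      simpa only [Function.comp_def, Pi.mul_apply, Complex.imCLM_apply] using h3
    have key : ((starRingEnd ℂ) (G x) * G x
          + (starRingEnd ℂ) (F x) * iteratedDeriv 2 u ((x:ℂ) + (y:ℂ) * Complex.I)).im = H x := by
      rw [hode]
      simp only [hHdef, hFdef, Complex.sq_norm]
      simp [Complex.mul_im, Complex.mul_re, Complex.normSq_apply, pow_succ]
      ring
    rwa [key] at h4
  -- continuity
  have hFc : Continuous F := hu_entire.continuous.comp (by continuity)
  have hHc : Continuous H := by
    apply Continuous.mul (by continuity)
    exact (continuous_norm.comp hFc).pow 2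
  -- integrability of H
  set D : ℝ := 4 * c ^ 2 * (1 + 3 * y ^ 2 + |lam.im|) with hDdef
  have hψtop : Tendsto (fun t : ℝ => D * (t ^ 5 * Real.exp (-(2 * t ^ p)))) atTop (𝓝 0) := by
    simpa using (tendsto_pow_mul_exp_neg_rpow_aux 5 hpp two_pos).const_mul D
  have claim : ∀ x : ℝ, 1 ≤ |x| →
      |H x| * (1 + |x|) ^ 2 ≤ D * (|x| ^ 5 * Real.exp (-(2 * |x| ^ p))) := by
    intro x hx
    have ht0 : (0:ℝ) < |x| := by linarith
    have hexp2 : (c * Real.exp (-(|x| ^ p))) ^ 2 = c ^ 2 * Real.exp (-(2 * |x| ^ p)) := by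
      rw [mul_pow, ← Real.exp_nat_mul]
      norm_num
    have h1 : |H x| ≤ (|x| ^ 3 + 3 * |x| * y ^ 2 + |lam.im|) * (c * Real.exp (-(|x| ^ p))) ^ 2 := by
      rw [hHdef]
      simp only [abs_mul]
      apply mul_le_mul
      · have e3 : |3 * x * y ^ 2| = 3 * |x| * y ^ 2 := by
          rw [_root_.abs_mul, _root_.abs_mul, _root_.abs_pow, _root_.sq_abs,
            _root_.abs_of_nonneg (by norm_num : (0:ℝ) ≤ 3)]
        calc |x ^ 3 - 3 * x * y ^ 2 - lam.im| ≤ |x ^ 3 - 3 * x * y ^ 2| + |lam.im| :=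
              abs_sub _ _
          _ ≤ |x ^ 3| + |3 * x * y ^ 2| + |lam.im| := by
              linarith [abs_sub (x ^ 3) (3 * x * y ^ 2)]
          _ = |x| ^ 3 + 3 * |x| * y ^ 2 + |lam.im| := by rw [_root_.abs_pow, e3]
      · rw [_root_.abs_of_nonneg (by positivity)]
        exact pow_le_pow_left₀ (norm_nonneg _) (habsF x) 2
      · positivity
      · positivity
    have h2 : |x| ^ 3 + 3 * |x| * y ^ 2 + |lam.im| ≤ (1 + 3 * y ^ 2 + |lam.im|) * |x| ^ 3 := by
      have e0 : (1:ℝ) ≤ |x| ^ 2 := by nlinarith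
      have e1 : |x| ≤ |x| ^ 3 := by nlinarith [mul_nonneg ht0.le (sub_nonneg.mpr e0)]
      have e2 : (1:ℝ) ≤ |x| ^ 3 := by nlinarith
      nlinarith [abs_nonneg lam.im, sq_nonneg y]
    have h3 : (1 + |x|) ^ 2 ≤ 4 * |x| ^ 2 := by nlinarith
    have h4 : |H x| ≤ (1 + 3 * y ^ 2 + |lam.im|) * |x| ^ 3
        * (c ^ 2 * Real.exp (-(2 * |x| ^ p))) := by
      rw [← hexp2]
      calc |H x| ≤ (|x| ^ 3 + 3 * |x| * y ^ 2 + |lam.im|) * (c * Real.exp (-(|x| ^ p))) ^ 2 := h1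
        _ ≤ (1 + 3 * y ^ 2 + |lam.im|) * |x| ^ 3 * (c * Real.exp (-(|x| ^ p))) ^ 2 := by
            apply mul_le_mul_of_nonneg_right h2 (by positivity)
    calc |H x| * (1 + |x|) ^ 2
        ≤ ((1 + 3 * y ^ 2 + |lam.im|) * |x| ^ 3 * (c ^ 2 * Real.exp (-(2 * |x| ^ p))))
          * (4 * |x| ^ 2) := by
          apply mul_le_mul h4 h3 (by positivity) (by positivity)
      _ = D * (|x| ^ 5 * Real.exp (-(2 * |x| ^ p))) := by rw [hDdef]; ring
  have hr_top : Tendsto (fun x : ℝ => |H x| * (1 + |x|) ^ 2) atTop (𝓝 0) := by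
    apply squeeze_zero' (Eventually.of_forall fun x => by positivity) ?_
      (hψtop.comp tendsto_abs_atTop_atTop)
    filter_upwards [eventually_ge_atTop (1:ℝ)] with x hx
    exact claim x (le_trans hx (le_abs_self x))
  have hr_bot : Tendsto (fun x : ℝ => |H x| * (1 + |x|) ^ 2) atBot (𝓝 0) := by
    apply squeeze_zero' (Eventually.of_forall fun x => by positivity) ?_
      (hψtop.comp tendsto_abs_atBot_atTop)
    filter_upwards [eventually_le_atBot (-1:ℝ)] with x hx
    exact claim x (le_abs.mpr (Or.inr (by linarith)))
  have hbig : ∀ l : Filter ℝ, Tendsto (fun x : ℝ => |H x| * (1 + |x|) ^ 2) l (𝓝 0) →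
      H =O[l] (fun x : ℝ => (1 + ‖x‖) ^ (-(2:ℝ))) := by
    intro l hl
    rw [isBigO_iff]
    refine ⟨1, ?_⟩
    filter_upwards [hl.eventually_le_const one_pos] with x hx
    have h1 : (0:ℝ) < 1 + |x| := by positivity
    have h2 : ((1 + ‖x‖ : ℝ)) ^ (-(2:ℝ)) = ((1 + |x|) ^ (2:ℕ))⁻¹ := by
      rw [Real.norm_eq_abs, Real.rpow_neg h1.le, ← Real.rpow_natCast]
      norm_num
    have h3 : ‖((1 + ‖x‖ : ℝ)) ^ (-(2:ℝ))‖ = ((1 + |x|) ^ (2:ℕ))⁻¹ := by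
      rw [Real.norm_eq_abs, h2]
      exact _root_.abs_of_nonneg (by positivity)
    rw [Real.norm_eq_abs, h3, one_mul, inv_eq_one_div, le_div_iff₀ (by positivity)]
    exact hx
  have hg_int : IntegrableAtFilter (fun x : ℝ => (1 + ‖x‖) ^ (-(2:ℝ))) atTop
      (volume : Measure ℝ) :=
    ⟨Set.univ, univ_mem, (integrable_one_add_norm (by norm_num)).integrableOn⟩
  have hg_int' : IntegrableAtFilter (fun x : ℝ => (1 + ‖x‖) ^ (-(2:ℝ))) atBot
      (volume : Measure ℝ) :=
    ⟨Set.univ, univ_mem, (integrable_one_add_norm (by norm_num)).integrableOn⟩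
  have hHint : Integrable H := (hHc.locallyIntegrable).integrable_of_isBigO_atBot_atTop
    (hbig _ hr_bot) hg_int' (hbig _ hr_top) hg_int
  -- limits of W
  have hexp : Tendsto (fun t : ℝ => c * Real.exp (-(t ^ p))) atTop (𝓝 0) := by
    have h1 : Tendsto (fun t : ℝ => -(t ^ p)) atTop atBot :=
      tendsto_neg_atTop_atBot.comp (tendsto_rpow_atTop hpp)
    simpa using (Real.tendsto_exp_atBot.comp h1).const_mul c
  have hWb : ∀ x : ℝ, ‖W x‖ ≤ (c * Real.exp (-(|x| ^ p))) * (c * Real.exp (-(|x| ^ p))) := by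
    intro x
    calc ‖W x‖ ≤ ‖(starRingEnd ℂ) (F x) * G x‖ := Complex.abs_im_le_norm _
      _ = ‖F x‖ * ‖G x‖ := by rw [norm_mul, Complex.norm_conj]
      _ ≤ _ := mul_le_mul (habsF x) (habsG x) (norm_nonneg _) (by positivity)
  have hprod : Tendsto (fun t : ℝ => (c * Real.exp (-(t ^ p))) * (c * Real.exp (-(t ^ p))))
      atTop (𝓝 0) := by simpa using hexp.mul hexp
  have hWtop : Tendsto W atTop (𝓝 0) :=
    squeeze_zero_norm hWb (hprod.comp tendsto_abs_atTop_atTop)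
  have hWbot : Tendsto W atBot (𝓝 0) :=
    squeeze_zero_norm hWb (hprod.comp tendsto_abs_atBot_atTop)
  have hIoi : ∫ x in Ioi (0:ℝ), H x = 0 - W 0 :=
    integral_Ioi_of_hasDerivAt_of_tendsto' (fun x _ => hWd x) hHint.integrableOn hWtop
  have hIic : ∫ x in Iic (0:ℝ), H x = W 0 - 0 :=
    integral_Iic_of_hasDerivAt_of_tendsto' (fun x _ => hWd x) hHint.integrableOn hWbot
  have htot := intervalIntegral.integral_Iic_add_Ioi (b := (0:ℝ)) hHint.integrableOn hHint.integrableOn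
  show ∫ x : ℝ, H x = 0
  rw [← htot, hIic, hIoi]
  ring
end
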